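/- arXiv:1604.07911 — 5 statements merged into one kernel-verified Lean document; each statement's English description precedes it below -/
import Mathlib

section
/- Let ψ_1 and ψ_2 satisfy Assumption 2 and suppose 0 < liminf_{λ→∞} exp(ψ_2(λ)²/2)/exp(ψ_1(λ)²/2) ≤ limsup_{λ→∞} exp(ψ_2(λ)²/2)/exp(ψ_1(λ)²/2) < ∞. Then 0 < liminf_{ε↓0} F[ψ_2](ε)/F[ψ_1](ε) ≤ limsup_{ε↓0} F[ψ_2](ε)/F[ψ_1](ε) < ∞. -/
open MeasureTheory Filter Set

/-- Partial sum `S_n = x_1 + ... + x_n`. -/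
noncomputable def S (x : ℕ → ℝ) (n : ℕ) : ℝ := ∑ i ∈ Finset.range n, x i

/-- Sum of squares `A_n² = x_1² + ... + x_n²`. -/
noncomputable def A2 (x : ℕ → ℝ) (n : ℕ) : ℝ := ∑ i ∈ Finset.range n, (x i) ^ 2

/-- Capital process of the Bayesian strategy with prior density `π`:
`K_n^π = ∫_0^1 ∏_{i=1}^n (1 + ε x_i) π(ε) dε`. -/
noncomputable def K (π : ℝ → ℝ) (x : ℕ → ℝ) (n : ℕ) : ℝ :=
  ∫ ε in Set.Ioo (0 : ℝ) 1, (∏ i ∈ Finset.range n, (1 + ε * x i)) * π ε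

/-- Assumption 1: `π` is a prior density, bounded below by `δπ` near the origin,
and `ε ↦ ε·π(ε)` is (weakly) increasing near the origin. -/
def Assumption1 (π : ℝ → ℝ) (επ δπ : ℝ) : Prop :=
  επ ∈ Set.Ioo (0 : ℝ) 1 ∧ 0 < δπ ∧
  (∀ ε ∈ Set.Icc (0 : ℝ) 1, 0 ≤ π ε) ∧
  MeasureTheory.IntegrableOn π (Set.Icc (0 : ℝ) 1) ∧
  (∀ ε ∈ Set.Ioo (0 : ℝ) επ, δπ ≤ π ε) ∧
  MonotoneOn (fun ε => ε * π ε) (Set.Ioo (0 : ℝ) επ)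

/-- Assumption 2: `ψ` is positive and increasing on `(M,∞)`, the integral
`∫_M^∞ ψ(λ) e^{-ψ(λ)²/2} dλ/λ` is finite, and `λ ψ(λ) e^{-ψ(λ)²/2} > δ` on `(M,∞)`. -/
def Assumption2 (ψ : ℝ → ℝ) (M δ : ℝ) : Prop :=
  0 < M ∧ 0 < δ ∧
  (∀ l ∈ Set.Ioi M, 0 < ψ l) ∧
  MonotoneOn ψ (Set.Ioi M) ∧
  MeasureTheory.IntegrableOn (fun l => ψ l * Real.exp (-(ψ l) ^ 2 / 2) / l) (Set.Ioi M) ∧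
  (∀ l ∈ Set.Ioi M, δ < l * ψ l * Real.exp (-(ψ l) ^ 2 / 2))

/-- The functional `F[ψ](ε) = (ψ(1/ε)/ε)·exp(-ψ(1/ε)²/2)`. -/
noncomputable def Ffun (ψ : ℝ → ℝ) (ε : ℝ) : ℝ :=
  ψ (1 / ε) / ε * Real.exp (-(ψ (1 / ε)) ^ 2 / 2)

/-- `β(ε) = max(-2 ln(ε π(ε)), 1)`. -/
noncomputable def betaFun (π : ℝ → ℝ) (ε : ℝ) : ℝ :=
  max (-2 * Real.log (ε * π ε)) 1

/-- The functional `G[π](λ) = √(β(1/λ) + ln β(1/λ))`. -/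
noncomputable def Gfun (π : ℝ → ℝ) (l : ℝ) : ℝ :=
  Real.sqrt (betaFun π (1 / l) + Real.log (betaFun π (1 / l)))

lemma psi_tendsto_atTop {ψ : ℝ → ℝ} {M δ : ℝ} (h : Assumption2 ψ M δ) :
    Filter.Tendsto ψ Filter.atTop Filter.atTop := by
  obtain ⟨hM, hδ, hpos, hmono, hint, _⟩ := h
  by_contra hcon
  rw [tendsto_atTop_atTop] at hcon
  push_neg at hcon
  obtain ⟨b, hb⟩ := hcon
  have hbd : ∀ l ∈ Set.Ioi M, ψ l < b := by
    intro l hl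
    obtain ⟨n, hn, hn2⟩ := hb l
    exact lt_of_le_of_lt (hmono hl (lt_of_lt_of_le hl hn) hn) hn2
  have hM1 : M + 1 ∈ Set.Ioi M := by simp
  set a := ψ (M + 1) with ha_def
  have ha : 0 < a := hpos _ hM1
  have hb0 : 0 < b := lt_trans ha (hbd _ hM1)
  set c := a * Real.exp (-b ^ 2 / 2) with hc_def
  have hc : 0 < c := mul_pos ha (Real.exp_pos _)
  -- c * l⁻¹ is integrable on Ioi (M+1)
  have hint' : IntegrableOn (fun l => ψ l * Real.exp (-(ψ l) ^ 2 / 2) / l) (Set.Ioi (M + 1)) :=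
    hint.mono_set (Set.Ioi_subset_Ioi (by linarith))
  have hci : IntegrableOn (fun l => c * l⁻¹) (Set.Ioi (M + 1)) := by
    refine MeasureTheory.Integrable.mono hint' ((measurable_inv.const_mul c).aestronglyMeasurable) ?_
    rw [ae_restrict_iff' measurableSet_Ioi]
    filter_upwards with l hl
    have hlM : l ∈ Set.Ioi M := by simp at hl ⊢; linarith
    have hl0 : 0 < l := by have := hM; simp at hl; linarith
    have hψ : 0 < ψ l := hpos _ hlM
    have hψa : a ≤ ψ l := hmono hM1 hlM (le_of_lt (by simpa using hl))
    have hψb : ψ l < b := hbd _ hlM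
    have hexp : Real.exp (-b ^ 2 / 2) ≤ Real.exp (-(ψ l) ^ 2 / 2) := by
      apply Real.exp_le_exp.mpr
      nlinarith
    rw [Real.norm_eq_abs, Real.norm_eq_abs, abs_of_nonneg, abs_of_nonneg]
    · calc c * l⁻¹ = a * Real.exp (-b ^ 2 / 2) / l := by rw [hc_def]; ring
        _ ≤ ψ l * Real.exp (-(ψ l) ^ 2 / 2) / l := by gcongr
    · positivity
    · positivity
  -- contradiction with non-integrability of 1/x
  have : IntegrableOn (fun l : ℝ => l⁻¹) (Set.Ioi (M + 1)) := by
    have := hci.const_mul c⁻¹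
    refine MeasureTheory.IntegrableOn.congr_fun this ?_ measurableSet_Ioi
    intro x hx
    show c⁻¹ * (c * x⁻¹) = x⁻¹
    field_simp
  have h2 : IntegrableOn (fun l : ℝ => l ^ (-1 : ℝ)) (Set.Ioi (M + 1)) := by
    refine MeasureTheory.IntegrableOn.congr_fun this ?_ measurableSet_Ioi
    intro x hx
    exact (Real.rpow_neg_one x).symm
  rw [integrableOn_Ioi_rpow_iff (by linarith : (0:ℝ) < M + 1)] at h2
  linarith

theorem F_preserves_equivalence (ψ₁ ψ₂ : ℝ → ℝ) (M₁ δ₁ M₂ δ₂ : ℝ)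
    (h₁ : Assumption2 ψ₁ M₁ δ₁) (h₂ : Assumption2 ψ₂ M₂ δ₂)
    (hlb : 0 < Filter.liminf
      (fun l => ((Real.exp ((ψ₂ l) ^ 2 / 2) / Real.exp ((ψ₁ l) ^ 2 / 2) : ℝ) : EReal))
      Filter.atTop)
    (hub : Filter.limsup
      (fun l => ((Real.exp ((ψ₂ l) ^ 2 / 2) / Real.exp ((ψ₁ l) ^ 2 / 2) : ℝ) : EReal))
      Filter.atTop < ⊤) :
    0 < Filter.liminf (fun ε => ((Ffun ψ₂ ε / Ffun ψ₁ ε : ℝ) : EReal))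
        (nhdsWithin (0 : ℝ) (Set.Ioi 0)) ∧
    Filter.limsup (fun ε => ((Ffun ψ₂ ε / Ffun ψ₁ ε : ℝ) : EReal))
        (nhdsWithin (0 : ℝ) (Set.Ioi 0)) < ⊤ := by
  have ht₁ := psi_tendsto_atTop h₁
  have ht₂ := psi_tendsto_atTop h₂
  set r : ℝ → ℝ := fun l => Real.exp ((ψ₂ l) ^ 2 / 2) / Real.exp ((ψ₁ l) ^ 2 / 2) with hr_def
  -- extract real lower bound cr
  obtain ⟨c', hc'0, hc'l⟩ := exists_between hlb
  have hc'bot : c' ≠ ⊥ := (lt_of_le_of_lt bot_le hc'0).ne'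
  have hc'top : c' ≠ ⊤ := (hc'l.trans_le le_top).ne
  set cr := c'.toReal with hcr_def
  have hcrc : (cr : EReal) = c' := EReal.coe_toReal hc'top hc'bot
  have hcr0 : 0 < cr := by
    have : (0 : EReal) < (cr : EReal) := by rw [hcrc]; exact hc'0
    exact_mod_cast this
  -- extract real upper bound Cr
  obtain ⟨C', hC'l, hC't⟩ := exists_between hub
  have hC'bot : C' ≠ ⊥ := (lt_of_le_of_lt bot_le hC'l).ne'
  have hC'top : C' ≠ ⊤ := hC't.ne
  set Cr := C'.toReal with hCr_def
  have hCrc : (Cr : EReal) = C' := EReal.coe_toReal hC'top hC'bot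
  have hge : ∀ᶠ l in atTop, cr < r l := by
    have h' := hc'l; rw [← hcrc] at h'
    filter_upwards [eventually_lt_of_lt_liminf h'] with l hl
    exact_mod_cast hl
  have hle : ∀ᶠ l in atTop, r l < Cr := by
    have h' := hC'l; rw [← hCrc] at h'
    filter_upwards [eventually_lt_of_limsup_lt h'] with l hl
    exact_mod_cast hl
  have hCr0 : 0 < Cr := by
    obtain ⟨l₀, hl₀⟩ := hle.exists
    have : 0 < r l₀ := div_pos (Real.exp_pos _) (Real.exp_pos _)
    linarith
  set K := 2 * (|Real.log cr| + |Real.log Cr|) with hK_def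
  have hK0 : 0 ≤ K := by positivity
  set s2 := Real.sqrt 2 with hs2_def
  have hs2sq : s2 ^ 2 = 2 := Real.sq_sqrt (by norm_num)
  have hs2pos : 0 < s2 := Real.sqrt_pos.mpr (by norm_num)
  set cs := Real.exp (-K / 2) / s2 with hcs_def
  set Cb := s2 * Real.exp (K / 2) with hCb_def
  have hcs0 : 0 < cs := div_pos (Real.exp_pos _) hs2pos
  set g : ℝ → ℝ :=
    fun l => ψ₂ l * Real.exp (-(ψ₂ l) ^ 2 / 2) / (ψ₁ l * Real.exp (-(ψ₁ l) ^ 2 / 2))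
    with hg_def
  have hg : ∀ᶠ l in atTop, (cs ≤ g l ∧ g l ≤ Cb) ∧ 0 < ψ₁ l := by
    filter_upwards [hge, hle, ht₁.eventually_ge_atTop (Real.sqrt K),
      ht₂.eventually_ge_atTop (Real.sqrt K), eventually_gt_atTop M₁,
      eventually_gt_atTop M₂] with l hrlo hrhi hp1 hp2 hM1 hM2
    have hp : 0 < ψ₁ l := h₁.2.2.1 l hM1
    have hq : 0 < ψ₂ l := h₂.2.2.1 l hM2
    set p := ψ₁ l
    set q := ψ₂ l
    have hpK : K ≤ p ^ 2 := by
      calc K = (Real.sqrt K) ^ 2 := (Real.sq_sqrt hK0).symm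
        _ ≤ p ^ 2 := by gcongr
    have hqK : K ≤ q ^ 2 := by
      calc K = (Real.sqrt K) ^ 2 := (Real.sq_sqrt hK0).symm
        _ ≤ q ^ 2 := by gcongr
    have hrl : r l = Real.exp ((q ^ 2 - p ^ 2) / 2) := by
      rw [hr_def]
      show Real.exp (q ^ 2 / 2) / Real.exp (p ^ 2 / 2) = _
      rw [← Real.exp_sub]; congr 1; ring
    have hub' : (q ^ 2 - p ^ 2) / 2 < Real.log Cr := by
      rw [Real.lt_log_iff_exp_lt hCr0]; rw [hrl] at hrhi; exact hrhi
    have hlb' : Real.log cr < (q ^ 2 - p ^ 2) / 2 := by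
      rw [Real.log_lt_iff_lt_exp hcr0]; rw [hrl] at hrlo; exact hrlo
    have hd1 : q ^ 2 - p ^ 2 ≤ K := by
      have := le_abs_self (Real.log Cr)
      have := abs_nonneg (Real.log cr)
      rw [hK_def]; linarith
    have hd2 : p ^ 2 - q ^ 2 ≤ K := by
      have := neg_abs_le (Real.log cr)
      have := abs_nonneg (Real.log Cr)
      rw [hK_def]; linarith
    have hq2 : q ^ 2 ≤ 2 * p ^ 2 := by linarith
    have hp2 : p ^ 2 ≤ 2 * q ^ 2 := by linarith
    have hqp : q ≤ s2 * p := by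
      calc q = Real.sqrt (q ^ 2) := (Real.sqrt_sq hq.le).symm
        _ ≤ Real.sqrt (2 * p ^ 2) := Real.sqrt_le_sqrt hq2
        _ = s2 * p := by
            rw [Real.sqrt_mul (by norm_num : (0:ℝ) ≤ 2), Real.sqrt_sq hp.le]
    have hpq : p ≤ s2 * q := by
      calc p = Real.sqrt (p ^ 2) := (Real.sqrt_sq hp.le).symm
        _ ≤ Real.sqrt (2 * q ^ 2) := Real.sqrt_le_sqrt hp2
        _ = s2 * q := by
            rw [Real.sqrt_mul (by norm_num : (0:ℝ) ≤ 2), Real.sqrt_sq hq.le]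
    have hgl : g l = (q / p) * Real.exp ((p ^ 2 - q ^ 2) / 2) := by
      rw [hg_def]
      show q * Real.exp (-q ^ 2 / 2) / (p * Real.exp (-p ^ 2 / 2)) = _
      rw [mul_div_mul_comm, ← Real.exp_sub]; congr 1; ring
    refine ⟨⟨?_, ?_⟩, hp⟩
    · rw [hgl]
      have he : Real.exp (-K / 2) ≤ Real.exp ((p ^ 2 - q ^ 2) / 2) :=
        Real.exp_le_exp.mpr (by linarith)
      have hqp' : 1 / s2 ≤ q / p := by
        rw [div_le_div_iff₀ hs2pos hp, one_mul, mul_comm]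
        exact hpq
      calc cs = (1 / s2) * Real.exp (-K / 2) := by rw [hcs_def]; ring
        _ ≤ (q / p) * Real.exp ((p ^ 2 - q ^ 2) / 2) :=
            mul_le_mul hqp' he (Real.exp_pos _).le (by positivity)
    · rw [hgl]
      have he : Real.exp ((p ^ 2 - q ^ 2) / 2) ≤ Real.exp (K / 2) :=
        Real.exp_le_exp.mpr (by linarith)
      have hqp' : q / p ≤ s2 := by rw [div_le_iff₀ hp]; exact hqp
      exact mul_le_mul hqp' he (Real.exp_pos _).le hs2pos.le
  have hmap : Tendsto (fun ε : ℝ => 1 / ε) (nhdsWithin (0:ℝ) (Set.Ioi 0)) atTop := by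
    simpa [one_div] using tendsto_inv_nhdsGT_zero (𝕜 := ℝ)
  have key : ∀ᶠ ε in nhdsWithin (0:ℝ) (Set.Ioi 0),
      cs ≤ Ffun ψ₂ ε / Ffun ψ₁ ε ∧ Ffun ψ₂ ε / Ffun ψ₁ ε ≤ Cb := by
    filter_upwards [hmap.eventually hg, eventually_mem_nhdsWithin] with ε hgε hε
    have hε0 : ε ≠ 0 := ne_of_gt hε
    obtain ⟨⟨hlo, hhi⟩, hb0⟩ := hgε
    have heq : Ffun ψ₂ ε / Ffun ψ₁ ε = g (1 / ε) := by
      rw [hg_def]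
      show ψ₂ (1 / ε) / ε * Real.exp (-(ψ₂ (1 / ε)) ^ 2 / 2) /
          (ψ₁ (1 / ε) / ε * Real.exp (-(ψ₁ (1 / ε)) ^ 2 / 2)) = _
      rw [div_eq_div_iff
        (mul_ne_zero (div_ne_zero (ne_of_gt hb0) hε0) (Real.exp_ne_zero _))
        (mul_ne_zero (ne_of_gt hb0) (Real.exp_ne_zero _))]
      field_simp
    exact ⟨heq ▸ hlo, heq ▸ hhi⟩
  constructor
  · have hlim : (cs : EReal) ≤ Filter.liminf (fun ε => ((Ffun ψ₂ ε / Ffun ψ₁ ε : ℝ) : EReal))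
        (nhdsWithin (0 : ℝ) (Set.Ioi 0)) := by
      refine Filter.le_liminf_of_le (h := ?_)
      filter_upwards [key] with ε hε
      exact_mod_cast hε.1
    exact lt_of_lt_of_le (by exact_mod_cast hcs0) hlim
  · have hlim : Filter.limsup (fun ε => ((Ffun ψ₂ ε / Ffun ψ₁ ε : ℝ) : EReal))
        (nhdsWithin (0 : ℝ) (Set.Ioi 0)) ≤ (Cb : EReal) := by
      refine Filter.limsup_le_of_le (h := ?_)
      filter_upwards [key] with ε hε
      exact_mod_cast hε.2
    exact lt_of_le_of_lt hlim (EReal.coe_lt_top Cb)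
end

section
/- Let π_1 and π_2 satisfy Assumption 1 and suppose 0 < liminf_{ε↓0} π_2(ε)/π_1(ε) ≤ limsup_{ε↓0} π_2(ε)/π_1(ε) < ∞. Then 0 < liminf_{λ→∞} exp(G[π_2](λ)²/2)/exp(G[π_1](λ)²/2) ≤ limsup_{λ→∞} exp(G[π_2](λ)²/2)/exp(G[π_1](λ)²/2) < ∞. -/
open MeasureTheory Filter Set

lemma betaFun_one_le (π : ℝ → ℝ) (ε : ℝ) : 1 ≤ betaFun π ε := le_max_right _ _

lemma Gfun_sq (π : ℝ → ℝ) (l : ℝ) :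
    Gfun π l ^ 2 = betaFun π (1 / l) + Real.log (betaFun π (1 / l)) := by
  have h1 : (1 : ℝ) ≤ betaFun π (1 / l) := betaFun_one_le π (1 / l)
  have h2 : (0 : ℝ) ≤ Real.log (betaFun π (1 / l)) := Real.log_nonneg h1
  exact Real.sq_sqrt (by linarith)

/-- Under Assumption 1, `ε·π(ε)` is eventually smaller than any positive `t` near `0⁺`. -/
lemma A1_small {π : ℝ → ℝ} {επ δπ : ℝ} (h : Assumption1 π επ δπ) {t : ℝ} (ht : 0 < t) :
    ∀ᶠ ε in nhdsWithin (0 : ℝ) (Set.Ioi 0), ε * π ε < t := by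
  obtain ⟨hεm, hδ, hnn, hint, hlow, hmono⟩ := h
  by_contra hc
  rw [Filter.not_eventually] at hc
  have key : ∀ ε ∈ Set.Ioo (0 : ℝ) επ, t ≤ ε * π ε := by
    intro ε hε
    have hmem : Set.Ioo (0 : ℝ) ε ∈ nhdsWithin (0 : ℝ) (Set.Ioi 0) :=
      Ioo_mem_nhdsGT hε.1
    obtain ⟨ε₀, hε₀P, hε₀m⟩ :=
      (hc.and_eventually (Filter.eventually_of_mem hmem (fun x hx => hx))).exists
    have h1 : t ≤ ε₀ * π ε₀ := not_lt.mp hε₀P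
    have h2 : ε₀ * π ε₀ ≤ ε * π ε :=
      hmono ⟨hε₀m.1, hε₀m.2.trans hε.2⟩ hε hε₀m.2.le
    linarith
  have hπb : ∀ ε ∈ Set.Ioo (0 : ℝ) επ, t * ε⁻¹ ≤ π ε := by
    intro ε hε
    have h1 := key ε hε
    rw [mul_inv_le_iff₀ hε.1]
    linarith [h1, mul_comm ε (π ε)]
  have hsub : Set.Ioo (0 : ℝ) επ ⊆ Set.Icc (0 : ℝ) 1 :=
    fun x hx => ⟨hx.1.le, hx.2.le.trans hεm.2.le⟩
  have hintπ : IntegrableOn π (Set.Ioo (0 : ℝ) επ) := hint.mono_set hsub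
  have hI : IntegrableOn (fun ε : ℝ => t * ε⁻¹) (Set.Ioo (0 : ℝ) επ) := by
    refine MeasureTheory.Integrable.mono hintπ ((measurable_const.mul measurable_inv).aestronglyMeasurable) ?_
    filter_upwards [self_mem_ae_restrict (measurableSet_Ioo :
      MeasurableSet (Set.Ioo (0 : ℝ) επ))] with x hx
    have hx0 : 0 < x := hx.1
    have h1 : 0 ≤ t * x⁻¹ := by positivity
    have h2 : 0 ≤ π x := hnn x (hsub hx)
    rw [Real.norm_of_nonneg h1, Real.norm_of_nonneg h2]
    exact hπb x hx
  have hI2 : IntegrableOn (fun ε : ℝ => ε⁻¹) (Set.Ioo (0 : ℝ) επ) := by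
    have := hI.const_mul t⁻¹
    have h' : Integrable (fun x : ℝ => x⁻¹) (volume.restrict (Set.Ioo (0 : ℝ) επ)) := by
      simpa [← mul_assoc, inv_mul_cancel₀ ht.ne'] using this
    exact h'
  have hI3 : IntegrableOn (fun x : ℝ => x ^ (-1 : ℝ)) (Set.Ioo (0 : ℝ) επ) := by
    refine hI2.congr_fun (fun x hx => ?_) measurableSet_Ioo
    rw [Real.rpow_neg hx.1.le, Real.rpow_one]
  have := (intervalIntegral.integrableOn_Ioo_rpow_iff hεm.1).mp hI3
  linarith

theorem G_preserves_equivalence (π₁ π₂ : ℝ → ℝ) (ε₁ δ₁ ε₂ δ₂ : ℝ)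
    (h₁ : Assumption1 π₁ ε₁ δ₁) (h₂ : Assumption1 π₂ ε₂ δ₂)
    (hlb : 0 < Filter.liminf (fun ε => ((π₂ ε / π₁ ε : ℝ) : EReal))
      (nhdsWithin (0 : ℝ) (Set.Ioi 0)))
    (hub : Filter.limsup (fun ε => ((π₂ ε / π₁ ε : ℝ) : EReal))
      (nhdsWithin (0 : ℝ) (Set.Ioi 0)) < ⊤) :
    0 < Filter.liminf
        (fun l => ((Real.exp ((Gfun π₂ l) ^ 2 / 2) / Real.exp ((Gfun π₁ l) ^ 2 / 2) : ℝ) : EReal))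
        Filter.atTop ∧
    Filter.limsup
        (fun l => ((Real.exp ((Gfun π₂ l) ^ 2 / 2) / Real.exp ((Gfun π₁ l) ^ 2 / 2) : ℝ) : EReal))
        Filter.atTop < ⊤ := by
  -- extract real bounds c < π₂/π₁ < C near 0
  obtain ⟨a, ha0, haL⟩ := exists_between hlb
  have haev : ∀ᶠ ε in nhdsWithin (0 : ℝ) (Set.Ioi 0),
      a < ((π₂ ε / π₁ ε : ℝ) : EReal) := Filter.eventually_lt_of_lt_liminf haL
  obtain ⟨b, hbL, hbT⟩ := exists_between hub
  have hbev : ∀ᶠ ε in nhdsWithin (0 : ℝ) (Set.Ioi 0),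
      ((π₂ ε / π₁ ε : ℝ) : EReal) < b := Filter.eventually_lt_of_limsup_lt hbL
  have haT : a ≠ ⊤ := (lt_of_lt_of_le haL le_top).ne
  have haB : a ≠ ⊥ := (lt_trans EReal.bot_lt_zero ha0).ne'
  have hb0 : (0 : EReal) < b := lt_trans (lt_of_lt_of_le hlb Filter.liminf_le_limsup) hbL
  have hbB : b ≠ ⊥ := (lt_trans EReal.bot_lt_zero hb0).ne'
  set c := a.toReal with hc_def
  set C := b.toReal with hC_def
  have hac : ((c : ℝ) : EReal) = a := EReal.coe_toReal haT haB
  have hbc : ((C : ℝ) : EReal) = b := EReal.coe_toReal hbT.ne hbB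
  have hc0 : 0 < c := by
    rw [← EReal.coe_pos, hac]; exact ha0
  have hC0 : 0 < C := by
    rw [← EReal.coe_pos, hbc]; exact hb0
  have hcev : ∀ᶠ ε in nhdsWithin (0 : ℝ) (Set.Ioi 0), c < π₂ ε / π₁ ε := by
    filter_upwards [haev] with ε h
    rw [← hac, EReal.coe_lt_coe_iff] at h; exact h
  have hCev : ∀ᶠ ε in nhdsWithin (0 : ℝ) (Set.Ioi 0), π₂ ε / π₁ ε < C := by
    filter_upwards [hbev] with ε h
    rw [← hbc, EReal.coe_lt_coe_iff] at h; exact h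
  -- positivity of π₁, π₂ near 0
  obtain ⟨hεm₁, hδ₁, hnn₁, hint₁, hlow₁, hmono₁⟩ := h₁
  obtain ⟨hεm₂, hδ₂, hnn₂, hint₂, hlow₂, hmono₂⟩ := h₂
  have hpos : ∀ᶠ ε in nhdsWithin (0 : ℝ) (Set.Ioi 0), 0 < π₁ ε ∧ 0 < π₂ ε := by
    filter_upwards [Ioo_mem_nhdsGT (lt_min hεm₁.1 hεm₂.1)] with ε hε
    exact ⟨lt_of_lt_of_le hδ₁ (hlow₁ ε ⟨hε.1, hε.2.trans_le (min_le_left _ _)⟩),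
      lt_of_lt_of_le hδ₂ (hlow₂ ε ⟨hε.1, hε.2.trans_le (min_le_right _ _)⟩)⟩
  -- the constant D
  set D : ℝ := 2 * (|Real.log c| + |Real.log C|) + 1 with hD_def
  have hD1 : 1 ≤ D := by
    have := abs_nonneg (Real.log c); have := abs_nonneg (Real.log C)
    rw [hD_def]; linarith
  -- smallness of ε π ε
  have hsm₁ : ∀ᶠ ε in nhdsWithin (0 : ℝ) (Set.Ioi 0),
      ε * π₁ ε < Real.exp (-(2 + 2 * D) / 2) :=
    A1_small ⟨hεm₁, hδ₁, hnn₁, hint₁, hlow₁, hmono₁⟩ (Real.exp_pos _)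
  have hsm₂ : ∀ᶠ ε in nhdsWithin (0 : ℝ) (Set.Ioi 0),
      ε * π₂ ε < Real.exp (-(1 : ℝ) / 2) :=
    A1_small ⟨hεm₂, hδ₂, hnn₂, hint₂, hlow₂, hmono₂⟩ (Real.exp_pos _)
  have hεpos : ∀ᶠ ε in nhdsWithin (0 : ℝ) (Set.Ioi 0), (0 : ℝ) < ε :=
    Filter.eventually_of_mem self_mem_nhdsWithin (fun x hx => hx)
  -- main eventual bound in ε
  have hΔ : ∀ᶠ ε in nhdsWithin (0 : ℝ) (Set.Ioi 0),
      |(betaFun π₂ ε + Real.log (betaFun π₂ ε))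
        - (betaFun π₁ ε + Real.log (betaFun π₁ ε))| ≤ D + 1 := by
    filter_upwards [hcev, hCev, hpos, hsm₁, hsm₂, hεpos] with ε hc' hC' hp hs1 hs2 hε0
    obtain ⟨hp1, hp2⟩ := hp
    have hx1 : 0 < ε * π₁ ε := mul_pos hε0 hp1
    have hx2 : 0 < ε * π₂ ε := mul_pos hε0 hp2
    have hl1 : Real.log (ε * π₁ ε) < -(2 + 2 * D) / 2 := by
      have := Real.log_lt_log hx1 hs1
      rwa [Real.log_exp] at this
    have hl2 : Real.log (ε * π₂ ε) < -(1 : ℝ) / 2 := by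
      have := Real.log_lt_log hx2 hs2
      rwa [Real.log_exp] at this
    have hβ1 : betaFun π₁ ε = -2 * Real.log (ε * π₁ ε) := by
      apply max_eq_left; nlinarith
    have hβ2 : betaFun π₂ ε = -2 * Real.log (ε * π₂ ε) := by
      apply max_eq_left; nlinarith
    set β₁ := betaFun π₁ ε
    set β₂ := betaFun π₂ ε
    have hβ1big : 2 + 2 * D ≤ β₁ := by rw [hβ1]; linarith
    have hβ2one : 1 ≤ β₂ := betaFun_one_le _ _
    -- difference of betas
    have hlogr : Real.log (ε * π₂ ε) - Real.log (ε * π₁ ε) = Real.log (π₂ ε / π₁ ε) := by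
      rw [Real.log_mul hε0.ne' hp2.ne', Real.log_mul hε0.ne' hp1.ne',
        Real.log_div hp2.ne' hp1.ne']
      ring
    have hdiff : β₂ - β₁ = -2 * Real.log (π₂ ε / π₁ ε) := by
      rw [hβ1, hβ2, ← hlogr]; ring
    have hr0 : 0 < π₂ ε / π₁ ε := div_pos hp2 hp1
    have hlc : Real.log c ≤ Real.log (π₂ ε / π₁ ε) := Real.log_le_log hc0 hc'.le
    have hlC : Real.log (π₂ ε / π₁ ε) ≤ Real.log C := Real.log_le_log hr0 hC'.le
    have habs : |Real.log (π₂ ε / π₁ ε)| ≤ |Real.log c| + |Real.log C| := by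
      rw [abs_le]
      constructor
      · calc -(|Real.log c| + |Real.log C|) ≤ -|Real.log c| := by
              have := abs_nonneg (Real.log C); linarith
          _ ≤ Real.log c := neg_abs_le _
          _ ≤ _ := hlc
      · calc Real.log (π₂ ε / π₁ ε) ≤ Real.log C := hlC
          _ ≤ |Real.log C| := le_abs_self _
          _ ≤ _ := by have := abs_nonneg (Real.log c); linarith
    have hdabs : |β₂ - β₁| ≤ D - 1 := by
      rw [hdiff, abs_mul]
      have : |(-2 : ℝ)| = 2 := by norm_num
      rw [this]
      rw [hD_def]; linarith
    -- ratio of betas in [1/2, 2]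
    have hβ1pos : 0 < β₁ := by linarith
    have hβ2pos : 0 < β₂ := by linarith
    have hβ2lb : β₁ / 2 ≤ β₂ := by
      have h1 := (abs_le.mp hdabs).1
      linarith
    have hβ2ub : β₂ ≤ 2 * β₁ := by
      have := (abs_le.mp hdabs).2; linarith
    have hlog2 : Real.log 2 ≤ 1 := by
      have := Real.log_le_sub_one_of_pos (by norm_num : (0:ℝ) < 2); linarith
    have hlogβlb : Real.log β₁ - 1 ≤ Real.log β₂ := by
      have h1 : Real.log (β₁ / 2) ≤ Real.log β₂ :=
        Real.log_le_log (by linarith) hβ2lb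
      rw [Real.log_div hβ1pos.ne' (by norm_num)] at h1
      linarith
    have hlogβub : Real.log β₂ ≤ Real.log β₁ + 1 := by
      have h1 : Real.log β₂ ≤ Real.log (2 * β₁) := Real.log_le_log hβ2pos hβ2ub
      rw [Real.log_mul (by norm_num) hβ1pos.ne'] at h1
      linarith
    rw [abs_le]
    have h1 := (abs_le.mp hdabs).1
    have h2 := (abs_le.mp hdabs).2
    constructor <;> linarith
  -- transfer to atTop
  have htend : Filter.Tendsto (fun l : ℝ => 1 / l) Filter.atTop
      (nhdsWithin (0 : ℝ) (Set.Ioi 0)) := by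
    simpa [one_div] using tendsto_inv_atTop_nhdsGT_zero (𝕜 := ℝ)
  have hLam : ∀ᶠ l in Filter.atTop,
      |(betaFun π₂ (1/l) + Real.log (betaFun π₂ (1/l)))
        - (betaFun π₁ (1/l) + Real.log (betaFun π₁ (1/l)))| ≤ D + 1 := htend.eventually hΔ
  have hratio : ∀ᶠ l in Filter.atTop,
      Real.exp (-(D+1)/2) ≤ Real.exp ((Gfun π₂ l) ^ 2 / 2) / Real.exp ((Gfun π₁ l) ^ 2 / 2)
      ∧ Real.exp ((Gfun π₂ l) ^ 2 / 2) / Real.exp ((Gfun π₁ l) ^ 2 / 2)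
        ≤ Real.exp ((D+1)/2) := by
    filter_upwards [hLam] with l h
    have heq : Real.exp ((Gfun π₂ l) ^ 2 / 2) / Real.exp ((Gfun π₁ l) ^ 2 / 2)
        = Real.exp (((Gfun π₂ l) ^ 2 - (Gfun π₁ l) ^ 2) / 2) := by
      rw [← Real.exp_sub]; ring_nf
    rw [heq, Gfun_sq, Gfun_sq]
    obtain ⟨h1, h2⟩ := abs_le.mp h
    constructor
    · apply Real.exp_le_exp.mpr; linarith
    · apply Real.exp_le_exp.mpr; linarith
  constructor
  · have h1 : ((Real.exp (-(D+1)/2) : ℝ) : EReal)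
        = Filter.liminf (fun _ : ℝ => ((Real.exp (-(D+1)/2) : ℝ) : EReal)) Filter.atTop :=
      (Filter.liminf_const _).symm
    refine lt_of_lt_of_le (EReal.coe_pos.mpr (Real.exp_pos (-(D+1)/2))) ?_
    rw [h1]
    exact Filter.liminf_le_liminf (hratio.mono fun l h => EReal.coe_le_coe_iff.mpr h.1)
  · refine lt_of_le_of_lt ?_ (EReal.coe_lt_top (Real.exp ((D+1)/2)))
    have h2 : Filter.limsup (fun _ : ℝ => ((Real.exp ((D+1)/2) : ℝ) : EReal)) Filter.atTop
        = ((Real.exp ((D+1)/2) : ℝ) : EReal) := Filter.limsup_const _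
    rw [← h2]
    exact Filter.limsup_le_limsup (hratio.mono fun l h => EReal.coe_le_coe_iff.mpr h.2)
end

section
/- Let π satisfy Assumption 1. Then there exists a nonnegative integrable function π̃ on (0,1) (which can be taken of the form π̃ = c·π with c : (0,1) → (0,∞) decreasing and lim_{ε↓0} c(ε) = ∞) such that for every sequence x : ℕ → ℝ with x_i ≥ -1 for all i: if Σ_{i=1}^∞ x_i² = ∞ and S_n > A_n·G[π](A_n²) for infinitely many n, then limsup_{n→∞} ∫_0^1 ∏_{i=1}^n (1 + ε x_i) π̃(ε) dε = ∞. -/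
open MeasureTheory Filter Set
open scoped ENNReal

section Aux
open Real

lemma log_deriv_aux (s : ℝ) (hs : (1:ℝ) + s ≠ 0) :
    HasDerivAt (fun y : ℝ => Real.log (1 + y)) (1/(1+s)) s := by
  have h : HasDerivAt (fun y : ℝ => 1 + y) 1 s := (hasDerivAt_id s).const_add 1
  simpa using h.log hs

lemma log_lb {ε t : ℝ} (hε0 : 0 ≤ ε) (hε : ε ≤ 1/2) (ht : -ε ≤ t) :
    t - t^2/2 - ε*t^2 ≤ Real.log (1+t) := by
  rcases le_or_gt 0 t with h0 | h0
  · -- t ≥ 0 : show t - t^2/2 ≤ log (1+t), drop ε t^2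
    have key : t - t^2/2 ≤ Real.log (1+t) := by
      set f : ℝ → ℝ := fun s => Real.log (1+s) - s + s^2/2 with hf
      have hmono : MonotoneOn f (Set.Icc 0 t) := by
        apply monotoneOn_of_deriv_nonneg (convex_Icc 0 t)
        · apply ContinuousOn.add
          apply ContinuousOn.sub
          · apply ContinuousOn.log (by fun_prop)
            intro s hs; simp only [Set.mem_Icc] at hs; nlinarith [hs.1]
          · fun_prop
          · fun_prop
        · intro s hs
          rw [interior_Icc] at hs
          have h1s : (1:ℝ) + s ≠ 0 := by rw [Set.mem_Ioo] at hs; nlinarith [hs.1]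
          have hd : HasDerivAt f (1/(1+s) - 1 + s) s := by
            have := ((log_deriv_aux s h1s).sub (hasDerivAt_id s)).add
              (((hasDerivAt_id s).pow 2).div_const 2)
            simp only [hf]
            refine this.congr_deriv ?_
            simp
          exact hd.differentiableAt.differentiableWithinAt
        · intro s hs
          rw [interior_Icc, Set.mem_Ioo] at hs
          have h1s : (0:ℝ) < 1 + s := by linarith [hs.1]
          have hd : HasDerivAt f (1/(1+s) - 1 + s) s := by
            have := ((log_deriv_aux s h1s.ne').sub (hasDerivAt_id s)).add
              (((hasDerivAt_id s).pow 2).div_const 2)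
            simp only [hf]
            refine this.congr_deriv ?_
            simp
          rw [hd.deriv]
          have : (1:ℝ) - s ≤ 1/(1+s) := by
            rw [le_div_iff₀ h1s]; nlinarith
          linarith
      have h0t : (0:ℝ) ∈ Set.Icc 0 t := by constructor <;> linarith
      have htt : t ∈ Set.Icc (0:ℝ) t := by constructor <;> linarith
      have := hmono h0t htt h0
      simp only [f] at this
      norm_num at this
      nlinarith [this]
    nlinarith [mul_nonneg hε0 (sq_nonneg t)]
  · -- t < 0, so ε > 0 and t ∈ [-ε, 0)
    have hεpos : 0 < ε := by by_contra h; push_neg at h; nlinarith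
    set g : ℝ → ℝ := fun s => Real.log (1+s) - s + s^2/2 + ε*s^2 with hg
    have hanti : AntitoneOn g (Set.Icc (-ε) 0) := by
      apply antitoneOn_of_deriv_nonpos (convex_Icc (-ε) 0)
      · apply ContinuousOn.add
        apply ContinuousOn.add
        apply ContinuousOn.sub
        · apply ContinuousOn.log (by fun_prop)
          intro s hs; simp only [Set.mem_Icc] at hs; nlinarith [hs.1]
        · fun_prop
        · fun_prop
        · fun_prop
      · intro s hs
        rw [interior_Icc] at hs
        have h1s : (1:ℝ) + s ≠ 0 := by rw [Set.mem_Ioo] at hs; nlinarith [hs.1]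
        have hd : HasDerivAt g (1/(1+s) - 1 + s + 2*ε*s) s := by
          have := (((log_deriv_aux s h1s).sub (hasDerivAt_id s)).add
            (((hasDerivAt_id s).pow 2).div_const 2)).add
            (((hasDerivAt_id s).pow 2).const_mul ε)
          simp only [hg]
          refine this.congr_deriv ?_
          simp; ring
        exact hd.differentiableAt.differentiableWithinAt
      · intro s hs
        rw [interior_Icc, Set.mem_Ioo] at hs
        have h1s : (0:ℝ) < 1 + s := by nlinarith [hs.1]
        have hd : HasDerivAt g (1/(1+s) - 1 + s + 2*ε*s) s := by
          have := (((log_deriv_aux s h1s.ne').sub (hasDerivAt_id s)).add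
            (((hasDerivAt_id s).pow 2).div_const 2)).add
            (((hasDerivAt_id s).pow 2).const_mul ε)
          simp only [hg]
          refine this.congr_deriv ?_
          simp; ring
        rw [hd.deriv]
        have key : 1/(1+s) ≤ 1 - s - 2*ε*s := by
          rw [div_le_iff₀ h1s]
          nlinarith [mul_nonneg (by linarith [hs.2] : (0:ℝ) ≤ -s) (by linarith [hs.1] : (0:ℝ) ≤ ε + s),
            mul_nonneg (sq_nonneg s) (by linarith : (0:ℝ) ≤ 1 - 2*ε)]
        linarith
    have hmem1 : t ∈ Set.Icc (-ε) 0 := ⟨ht, h0.le⟩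
    have hmem2 : (0:ℝ) ∈ Set.Icc (-ε) 0 := ⟨by linarith, le_refl 0⟩
    have := hanti hmem1 hmem2 h0.le
    simp only [g] at this
    norm_num at this
    nlinarith [this]

end Aux

lemma prod_lb (x : ℕ → ℝ) (hx : ∀ i, -1 ≤ x i) (n : ℕ) {ε : ℝ} (h0 : 0 < ε) (h2 : ε ≤ 1/2) :
    Real.exp (ε * S x n - A2 x n * ε^2/2 - A2 x n * ε^3) ≤
      ∏ i ∈ Finset.range n, (1 + ε * x i) := by
  have hpos : ∀ i ∈ Finset.range n, (0:ℝ) < 1 + ε * x i := by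
    intro i _
    have : ε * x i ≥ ε * (-1) := by
      apply mul_le_mul_of_nonneg_left (hx i) h0.le
    nlinarith
  have hprod : ∏ i ∈ Finset.range n, (1 + ε * x i) =
      Real.exp (∑ i ∈ Finset.range n, Real.log (1 + ε * x i)) := by
    rw [Real.exp_sum]
    exact (Finset.prod_congr rfl fun i hi => (Real.exp_log (hpos i hi)).symm)
  rw [hprod]
  apply Real.exp_le_exp.2
  have hterm : ∀ i ∈ Finset.range n,
      ε * x i - (ε * x i)^2/2 - ε*(ε * x i)^2 ≤ Real.log (1 + ε * x i) := by
    intro i _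
    apply log_lb h0.le h2
    have : ε * (-1) ≤ ε * x i := mul_le_mul_of_nonneg_left (hx i) h0.le
    linarith [this]
  have e1 : ε * S x n = ∑ i ∈ Finset.range n, ε * x i := by rw [S, Finset.mul_sum]
  have e2 : A2 x n * ε^2/2 = ∑ i ∈ Finset.range n, (ε * x i)^2/2 := by
    rw [A2, Finset.sum_mul, Finset.sum_div]
    exact Finset.sum_congr rfl fun i _ => by ring
  have e3 : A2 x n * ε^3 = ∑ i ∈ Finset.range n, ε*(ε * x i)^2 := by
    rw [A2, Finset.sum_mul]
    exact Finset.sum_congr rfl fun i _ => by ring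
  calc ε * S x n - A2 x n * ε^2/2 - A2 x n * ε^3
      = ∑ i ∈ Finset.range n, (ε * x i - (ε * x i)^2/2 - ε*(ε * x i)^2) := by
        rw [e1, e2, e3, ← Finset.sum_sub_distrib, ← Finset.sum_sub_distrib]
    _ ≤ ∑ i ∈ Finset.range n, Real.log (1 + ε * x i) := Finset.sum_le_sum hterm

lemma K_lb (πt : ℝ → ℝ) (hnn : ∀ ε ∈ Set.Ioo (0:ℝ) 1, 0 ≤ πt ε)
    (hint : MeasureTheory.IntegrableOn πt (Set.Ioo (0:ℝ) 1))
    (x : ℕ → ℝ) (hx : ∀ i, -1 ≤ x i) (n : ℕ) {l w m : ℝ} (hw : 0 < w)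
    (hI : Set.Ioo l (l+w) ⊆ Set.Ioo (0:ℝ) 1)
    (hm : ∀ ε ∈ Set.Ioo l (l+w), m ≤ (∏ i ∈ Finset.range n, (1 + ε * x i)) * πt ε) :
    m * w ≤ K πt x n := by
  set f : ℝ → ℝ := fun ε => (∏ i ∈ Finset.range n, (1 + ε * x i)) * πt ε with hf
  have hfnn : ∀ ε ∈ Set.Ioo (0:ℝ) 1, 0 ≤ f ε := by
    intro ε hε
    apply mul_nonneg _ (hnn ε hε)
    apply Finset.prod_nonneg
    intro i _
    have h1 : ε * x i ≥ ε * (-1) := mul_le_mul_of_nonneg_left (hx i) hε.1.le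
    nlinarith [hε.2]
  have hfae : 0 ≤ᵐ[volume.restrict (Set.Ioo (0:ℝ) 1)] f := by
    filter_upwards [ae_restrict_mem measurableSet_Ioo] with ε hε using hfnn ε hε
  have hcont : Continuous fun ε : ℝ => ∏ i ∈ Finset.range n, (1 + ε * x i) := by
    apply continuous_finset_prod
    intro i _; continuity
  have hfint : MeasureTheory.IntegrableOn f (Set.Ioo (0:ℝ) 1) := by
    set B : ℝ := ∏ i ∈ Finset.range n, (1 + |x i|) with hB
    have hmeas : AEStronglyMeasurable f (volume.restrict (Set.Ioo (0:ℝ) 1)) :=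
      (hcont.aestronglyMeasurable).mul hint.1
    apply MeasureTheory.Integrable.mono' (hint.const_mul B) hmeas
    filter_upwards [ae_restrict_mem measurableSet_Ioo] with ε hε
    simp only [hf, norm_mul, Real.norm_eq_abs]
    rw [abs_of_nonneg (hnn ε hε)]
    apply mul_le_mul_of_nonneg_right _ (hnn ε hε)
    calc |∏ i ∈ Finset.range n, (1 + ε * x i)| = ∏ i ∈ Finset.range n, |1 + ε * x i| := by
          rw [Finset.abs_prod]
      _ ≤ B := by
          apply Finset.prod_le_prod (fun i _ => abs_nonneg _)
          intro i _
          calc |1 + ε * x i| ≤ 1 + |ε * x i| := by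
                have := abs_add_le (1:ℝ) (ε * x i); simpa using this
            _ ≤ 1 + |x i| := by
                rw [abs_mul]
                have hε1 : |ε| ≤ 1 := by
                  rw [abs_of_nonneg hε.1.le]; exact hε.2.le
                nlinarith [abs_nonneg (x i)]
  have step1 : ∫ ε in Set.Ioo l (l+w), f ε ≤ ∫ ε in Set.Ioo (0:ℝ) 1, f ε :=
    setIntegral_mono_set hfint hfae (HasSubset.Subset.eventuallyLE hI)
  have step2 : m * w ≤ ∫ ε in Set.Ioo l (l+w), f ε := by
    have := setIntegral_ge_of_const_le (measurableSet_Ioo (a := l) (b := l+w))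
      (by rw [Real.volume_Ioo]; exact ENNReal.ofReal_ne_top)
      hm (hfint.mono_set hI)
    rw [Real.volume_real_Ioo_of_le (by linarith), smul_eq_mul] at this
    calc m * w = (l + w - l) * m := by ring
      _ ≤ _ := this
  calc m * w ≤ ∫ ε in Set.Ioo l (l+w), f ε := step2
    _ ≤ K πt x n := step1

lemma exists_c (π : ℝ → ℝ) (hπint : MeasureTheory.IntegrableOn π (Set.Icc (0:ℝ) 1))
    (hnn : ∀ ε ∈ Set.Icc (0:ℝ) 1, 0 ≤ π ε) :
    ∃ c : ℝ → ℝ, (∀ ε ∈ Set.Ioo (0:ℝ) 1, 0 < c ε) ∧ AntitoneOn c (Set.Ioo (0:ℝ) 1) ∧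
      Filter.Tendsto c (nhdsWithin (0 : ℝ) (Set.Ioi 0)) Filter.atTop ∧
      MeasureTheory.IntegrableOn (fun ε => c ε * π ε) (Set.Ioo (0:ℝ) 1) := by
  classical
  set ν : Measure ℝ := volume.restrict (Set.Ioo (0:ℝ) 1) with hν
  set g : ℝ → ℝ≥0∞ := fun ε => ENNReal.ofReal (π ε) with hg
  set μ : Measure ℝ := ν.withDensity g with hμ
  have hπIoo : MeasureTheory.IntegrableOn π (Set.Ioo (0:ℝ) 1) :=
    hπint.mono_set Set.Ioo_subset_Icc_self
  -- μ is a finite measure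
  have hTfin : μ Set.univ < ⊤ := by
    rw [hμ, withDensity_apply g MeasurableSet.univ, Measure.restrict_univ]
    have hb : ∀ᵐ ε ∂ν, g ε ≤ ‖π ε‖ₑ := by
      filter_upwards with ε
      rw [hg]
      simp only []
      rw [Real.enorm_eq_ofReal_abs]
      exact ENNReal.ofReal_le_ofReal (le_abs_self _)
    calc ∫⁻ ε, g ε ∂ν ≤ ∫⁻ ε, ‖π ε‖ₑ ∂ν := lintegral_mono_ae hb
      _ < ⊤ := hπIoo.2
  set T : ℝ≥0∞ := μ Set.univ with hT
  -- tail of μ tends to 0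
  have htail : Filter.Tendsto (fun m : ℕ => μ (Set.Ioo 0 ((1/2:ℝ)^m))) Filter.atTop (nhds 0) := by
    have h1 : Antitone (fun m : ℕ => Set.Ioo (0:ℝ) ((1/2:ℝ)^m)) := by
      intro i j hij
      apply Set.Ioo_subset_Ioo le_rfl
      exact pow_le_pow_of_le_one (by norm_num) (by norm_num) hij
    have h2 : (⋂ m : ℕ, Set.Ioo (0:ℝ) ((1/2:ℝ)^m)) = ∅ := by
      ext y
      simp only [Set.mem_iInter, Set.mem_Ioo, Set.mem_empty_iff_false, iff_false, not_forall]
      by_contra h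
      push_neg at h
      obtain ⟨m, hm⟩ := exists_pow_lt_of_lt_one (h 0).1 (by norm_num : (1/2:ℝ) < 1)
      exact absurd (h m).2 (not_lt.2 hm.le)
    have := tendsto_measure_iInter_atTop (μ := μ)
      (fun m => (measurableSet_Ioo).nullMeasurableSet) h1 ⟨0, (lt_of_le_of_lt (measure_mono (Set.subset_univ _)) hTfin).ne⟩
    rw [h2] at this
    simpa [Function.comp_def] using this
  -- choice of quantile points
  have H : ∀ (k : ℕ) (t : ℝ), ∃ s : ℝ, 0 < s ∧ (0 < t → s < t) ∧ s ≤ (1/2:ℝ)^k ∧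
      μ (Set.Ioo 0 s) ≤ (2⁻¹ : ℝ≥0∞)^(2*k) := by
    intro k t
    have hpos : (0:ℝ≥0∞) < (2⁻¹ : ℝ≥0∞)^(2*k) := by
      apply ENNReal.pow_pos
      simp
    have ev1 : ∀ᶠ m : ℕ in atTop, μ (Set.Ioo 0 ((1/2:ℝ)^m)) < (2⁻¹ : ℝ≥0∞)^(2*k) :=
      htail.eventually_lt_const hpos
    have ev2 : ∀ᶠ m : ℕ in atTop, (1/2:ℝ)^m ≤ (1/2:ℝ)^k := by
      filter_upwards [eventually_ge_atTop k] with m hm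
      exact pow_le_pow_of_le_one (by norm_num) (by norm_num) hm
    have ev3 : ∀ᶠ m : ℕ in atTop, (0 < t → (1/2:ℝ)^m < t) := by
      rcases le_or_gt t 0 with h | h
      · filter_upwards with m ht; linarith
      · obtain ⟨m₀, hm₀⟩ := exists_pow_lt_of_lt_one h (by norm_num : (1/2:ℝ) < 1)
        filter_upwards [eventually_ge_atTop m₀] with m hm ht
        calc (1/2:ℝ)^m ≤ (1/2:ℝ)^m₀ := pow_le_pow_of_le_one (by norm_num) (by norm_num) hm
          _ < t := hm₀
    obtain ⟨m, hm⟩ := ((ev1.and ev2).and ev3).exists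
    exact ⟨(1/2:ℝ)^m, pow_pos (by norm_num) m, hm.2, hm.1.2, hm.1.1.le⟩
  choose F hF1 hF2 hF3 hF4 using H
  set b : ℕ → ℝ := fun k => Nat.rec 1 (fun k bk => F k bk) k with hb
  have hb0 : b 0 = 1 := rfl
  have hbsucc : ∀ k, b (k+1) = F k (b k) := fun k => rfl
  have hbpos : ∀ k, 0 < b k := by
    intro k; induction k with
    | zero => norm_num [hb0]
    | succ k ih => rw [hbsucc]; exact hF1 k (b k)
  have hbanti : StrictAnti b := by
    apply strictAnti_nat_of_succ_lt
    intro k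
    rw [hbsucc]
    exact hF2 k (b k) (hbpos k)
  have hble : ∀ k, b (k+1) ≤ (1/2:ℝ)^k := fun k => by rw [hbsucc]; exact hF3 k (b k)
  have hbmeas : ∀ k, μ (Set.Ioo 0 (b (k+1))) ≤ (2⁻¹ : ℝ≥0∞)^(2*k) := fun k => by
    rw [hbsucc]; exact hF4 k (b k)
  have hb1 : ∀ k, b k ≤ 1 := by
    intro k
    cases k with
    | zero => simp [hb0]
    | succ k => exact le_trans (hbanti (Nat.zero_lt_succ k)).le (le_of_eq hb0)
  -- nonemptiness of the index set
  have hne : ∀ ε : ℝ, 0 < ε → {k : ℕ | b k ≤ ε}.Nonempty := by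
    intro ε hε
    obtain ⟨m, hm⟩ := exists_pow_lt_of_lt_one hε (by norm_num : (1/2:ℝ) < 1)
    exact ⟨m+1, le_trans (hble m) hm.le⟩
  set N : ℝ → ℕ := fun ε => sInf {k : ℕ | b k ≤ ε} with hN
  have hNmem : ∀ ε : ℝ, 0 < ε → b (N ε) ≤ ε := fun ε hε => Nat.sInf_mem (hne ε hε)
  have hNlt : ∀ (ε : ℝ) (k : ℕ), 0 < ε → ε < b k → k < N ε := by
    intro ε k hε hlt
    by_contra h
    push_neg at h
    have : b (N ε) ≥ b k := by
      rcases eq_or_lt_of_le h with h' | h'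
      · rw [h']
      · exact (hbanti h').le
    linarith [hNmem ε hε]
  set c : ℝ → ℝ := fun ε => (2:ℝ) ^ (N ε) with hc
  have hcpos : ∀ ε : ℝ, 0 < c ε := fun ε => pow_pos (by norm_num) _
  have hcanti : AntitoneOn c (Set.Ioo (0:ℝ) 1) := by
    intro ε hε ε' hε' hle
    apply pow_le_pow_right₀ (by norm_num : (1:ℝ) ≤ 2)
    exact Nat.sInf_le (show N ε ∈ {k : ℕ | b k ≤ ε'} from le_trans (hNmem ε hε.1) hle)
  have hctend : Filter.Tendsto c (nhdsWithin (0 : ℝ) (Set.Ioi 0)) Filter.atTop := by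
    rw [tendsto_atTop]
    intro C
    obtain ⟨k, hk⟩ := pow_unbounded_of_one_lt C (by norm_num : (1:ℝ) < 2)
    have hmem : Set.Ioo (0:ℝ) (b k) ∈ nhdsWithin (0 : ℝ) (Set.Ioi 0) :=
      Ioo_mem_nhdsGT_of_mem ⟨le_refl 0, hbpos k⟩
    filter_upwards [hmem] with ε hε
    have hlt : k < N ε := hNlt ε k hε.1 hε.2
    calc C ≤ (2:ℝ)^k := hk.le
      _ ≤ (2:ℝ)^(N ε) := pow_le_pow_right₀ (by norm_num) hlt.le
  have hNIco : ∀ (k : ℕ) (ε : ℝ), b (k+1) ≤ ε → ε < b k → N ε = k+1 := by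
    intro k ε h1 h2
    have hεpos : 0 < ε := lt_of_lt_of_le (hbpos (k+1)) h1
    apply le_antisymm
    · exact Nat.sInf_le h1
    · exact hNlt ε k hεpos h2
  -- the pieces
  set Q : ℕ → Set ℝ := fun k => Set.Ico (b (k+1)) (b k) with hQ
  have hQmeas : ∀ k, MeasurableSet (Q k) := fun k => measurableSet_Ico
  have hQdisj : Pairwise (Function.onFun Disjoint Q) := by
    have key : ∀ i j : ℕ, i < j → Disjoint (Q i) (Q j) := by
      intro i j hij
      rw [Set.disjoint_left]
      rintro y ⟨hy1, hy2⟩ ⟨hy3, hy4⟩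
      have : b j ≤ b (i+1) := by
        rcases eq_or_lt_of_le (Nat.succ_le_of_lt hij) with h | h
        · rw [← h]
        · exact (hbanti h).le
      linarith [lt_of_lt_of_le hy4 this]
    intro i j hij
    rcases lt_or_gt_of_ne hij with h | h
    · exact key i j h
    · exact (key j i h).symm
  have hcover : Set.Ioo (0:ℝ) 1 ⊆ ⋃ k, Q k := by
    intro y hy
    have hypos : 0 < y := hy.1
    have hN1 : 1 ≤ N y := by
      rcases Nat.eq_zero_or_pos (N y) with h | h
      · exfalso
        have := hNmem y hypos
        rw [h, hb0] at this
        linarith [hy.2]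
      · exact h
    obtain ⟨m, hm⟩ : ∃ m, N y = m + 1 := ⟨N y - 1, (Nat.succ_pred_eq_of_pos hN1).symm⟩
    refine Set.mem_iUnion.2 ⟨m, ?_, ?_⟩
    · rw [← hm]; exact hNmem y hypos
    · by_contra h
      push_neg at h
      have : m ∈ {k : ℕ | b k ≤ y} := h
      have h2 : N y ≤ m := Nat.sInf_le this
      omega
  refine ⟨c, fun ε _ => hcpos ε, hcanti, hctend, ?_⟩
  have hmeasc : AEMeasurable c ν := aemeasurable_restrict_of_antitoneOn measurableSet_Ioo hcanti
  refine ⟨(hmeasc.aestronglyMeasurable).mul hπIoo.1, ?_⟩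
  rw [MeasureTheory.HasFiniteIntegral]
  set U : Set ℝ := ⋃ k, Q k with hU
  have hUmeas : MeasurableSet U := MeasurableSet.iUnion hQmeas
  have hcongr : ∫⁻ ε, ‖c ε * π ε‖ₑ ∂ν = ∫⁻ ε, ENNReal.ofReal (c ε * π ε) ∂ν := by
    apply lintegral_congr_ae
    filter_upwards [ae_restrict_mem measurableSet_Ioo] with ε hε
    rw [Real.enorm_eq_ofReal (mul_nonneg (hcpos ε).le (hnn ε (Set.Ioo_subset_Icc_self hε)))]
  rw [hcongr]
  set h : ℝ → ℝ≥0∞ := fun ε => ENNReal.ofReal (c ε * π ε) with hh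
  have hsplit : ∫⁻ ε, h ε ∂ν = (∫⁻ ε in U, h ε ∂ν) + ∫⁻ ε in Uᶜ, h ε ∂ν :=
    (lintegral_add_compl h hUmeas).symm
  have hzero : ∫⁻ ε in Uᶜ, h ε ∂ν = 0 := by
    apply setLIntegral_measure_zero
    rw [hν, Measure.restrict_apply hUmeas.compl]
    convert measure_empty (μ := (volume : Measure ℝ))
    rw [Set.eq_empty_iff_forall_notMem]
    rintro y ⟨hy1, hy2⟩
    exact hy1 (hcover hy2)
  have hpiece : ∀ k : ℕ, ∫⁻ ε in Q k, h ε ∂ν ≤ (2*T + 8) * (2⁻¹ : ℝ≥0∞)^k := by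
    intro k
    have hstepA : ∫⁻ ε in Q k, h ε ∂ν ≤ ∫⁻ ε in Q k, (2:ℝ≥0∞)^(k+1) * g ε ∂ν := by
      apply setLIntegral_mono' (hQmeas k)
      intro ε hε
      have hNε : N ε = k + 1 := hNIco k ε hε.1 hε.2
      have : c ε = (2:ℝ)^(k+1) := by rw [hc]; simp only []; rw [hNε]
      rw [hh]
      simp only []
      rw [this, ENNReal.ofReal_mul (by positivity)]
      apply mul_le_mul_left
      rw [ENNReal.ofReal_pow (by norm_num)]
      norm_num
    have hstepB : ∫⁻ ε in Q k, (2:ℝ≥0∞)^(k+1) * g ε ∂ν = (2:ℝ≥0∞)^(k+1) * μ (Q k) := by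
      rw [lintegral_const_mul' _ _ (ENNReal.pow_ne_top (by norm_num)), hμ,
        withDensity_apply g (hQmeas k)]
    have hstepD : μ (Q k) ≤ μ (Set.Ioo 0 (b k)) := by
      apply measure_mono
      intro y hy
      exact ⟨lt_of_lt_of_le (hbpos (k+1)) hy.1, hy.2⟩
    calc ∫⁻ ε in Q k, h ε ∂ν ≤ (2:ℝ≥0∞)^(k+1) * μ (Q k) := by rw [← hstepB]; exact hstepA
      _ ≤ (2*T + 8) * (2⁻¹ : ℝ≥0∞)^k := by
          cases k with
          | zero =>
            calc (2:ℝ≥0∞)^(0+1) * μ (Q 0) = 2 * μ (Q 0) := by norm_num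
              _ ≤ 2 * T := by
                  apply mul_le_mul_right
                  exact le_trans hstepD (measure_mono (Set.subset_univ _))
              _ ≤ 2*T + 8 := le_self_add
              _ ≤ (2*T + 8) * 2⁻¹ ^ 0 := by norm_num
          | succ m =>
            have hμb : μ (Set.Ioo 0 (b (m+1))) ≤ (2⁻¹ : ℝ≥0∞)^(2*m) := hbmeas m
            have e : (2:ℝ≥0∞)^(m+1+1) * (2⁻¹:ℝ≥0∞)^(2*m) = 8 * (2⁻¹:ℝ≥0∞)^(m+1) := by
              have hmul : (2:ℝ≥0∞)^m * (2⁻¹:ℝ≥0∞)^m = 1 := by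
                rw [← mul_pow, ENNReal.mul_inv_cancel (by norm_num) (by norm_num), one_pow]
              have h82 : (8:ℝ≥0∞) * 2⁻¹ = 4 := by
                rw [show (8:ℝ≥0∞) = 4*2 by norm_num, mul_assoc,
                  ENNReal.mul_inv_cancel (by norm_num) (by norm_num), mul_one]
              calc (2:ℝ≥0∞)^(m+1+1) * (2⁻¹:ℝ≥0∞)^(2*m)
                  = ((2:ℝ≥0∞)^m * (2⁻¹:ℝ≥0∞)^m) * ((2:ℝ≥0∞)^2 * (2⁻¹:ℝ≥0∞)^m) := by
                    rw [two_mul, pow_add, pow_add]; ring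
                _ = (2:ℝ≥0∞)^2 * (2⁻¹:ℝ≥0∞)^m := by rw [hmul, one_mul]
                _ = 8 * (2⁻¹:ℝ≥0∞)^(m+1) := by
                    have e2 : (8:ℝ≥0∞) * 2⁻¹^(m+1) = (8 * 2⁻¹) * 2⁻¹^m := by ring
                    rw [e2, h82]
                    norm_num
            calc (2:ℝ≥0∞)^(m+1+1) * μ (Q (m+1)) ≤ (2:ℝ≥0∞)^(m+1+1) * (2⁻¹:ℝ≥0∞)^(2*m) :=
                  mul_le_mul_right (le_trans hstepD hμb) _
              _ = 8 * (2⁻¹:ℝ≥0∞)^(m+1) := e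
              _ ≤ (2*T + 8) * (2⁻¹ : ℝ≥0∞)^(m+1) := mul_le_mul_left le_add_self _
  calc ∫⁻ ε, h ε ∂ν = (∫⁻ ε in U, h ε ∂ν) + ∫⁻ ε in Uᶜ, h ε ∂ν := hsplit
    _ = ∫⁻ ε in U, h ε ∂ν := by rw [hzero, add_zero]
    _ = ∑' k, ∫⁻ ε in Q k, h ε ∂ν := by rw [hU, lintegral_iUnion hQmeas hQdisj]
    _ ≤ ∑' k : ℕ, (2*T + 8) * (2⁻¹ : ℝ≥0∞)^k := ENNReal.tsum_le_tsum hpiece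
    _ = (2*T + 8) * ∑' k : ℕ, (2⁻¹ : ℝ≥0∞)^k := ENNReal.tsum_mul_left
    _ = (2*T + 8) * 2 := by rw [ENNReal.tsum_geometric, ENNReal.one_sub_inv_two, inv_inv]
    _ < ⊤ := by
        apply ENNReal.mul_lt_top _ (by norm_num)
        apply ENNReal.add_lt_top.2
        exact ⟨ENNReal.mul_lt_top (by norm_num) hTfin, by norm_num⟩

set_option maxHeartbeats 2000000 in
lemma key_lemma (π : ℝ → ℝ) (επ δπ : ℝ) (hπ : Assumption1 π επ δπ)
    (c : ℝ → ℝ) (hcpos : ∀ ε ∈ Set.Ioo (0:ℝ) 1, 0 < c ε)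
    (hcanti : AntitoneOn c (Set.Ioo (0:ℝ) 1))
    (hctend : Filter.Tendsto c (nhdsWithin (0 : ℝ) (Set.Ioi 0)) Filter.atTop)
    (hint : MeasureTheory.IntegrableOn (fun ε => c ε * π ε) (Set.Ioo (0:ℝ) 1))
    (x : ℕ → ℝ) (hx : ∀ i, -1 ≤ x i) (M : ℝ) (hM : 1 ≤ M) :
    ∃ Λ : ℝ, ∀ n, Λ ≤ A2 x n → Real.sqrt (A2 x n) * Gfun π (A2 x n) < S x n →
      M ≤ K (fun ε => c ε * π ε) x n := by
  obtain ⟨⟨hεπ0, hεπ1⟩, hδπ, hπnn, hπint, hπlow, hπmono⟩ := hπ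
  obtain ⟨a, ha⟩ : ∃ v:ℝ, v = min (επ/2) (1/32) := ⟨_, rfl⟩
  have ha0 : 0 < a := by rw [ha]; exact lt_min (by linarith) (by norm_num)
  have ha32 : a ≤ 1/32 := by rw [ha]; exact min_le_right _ _
  have ha2επ : 2*a ≤ επ := by
    have h := min_le_left (επ/2) (1/32); rw [← ha] at h; linarith
  have haI : a ∈ Set.Ioo (0:ℝ) 1 := ⟨ha0, by linarith⟩
  have h2aI : 2*a ∈ Set.Ioo (0:ℝ) 1 := ⟨by linarith, by linarith⟩
  obtain ⟨ca, hca⟩ : ∃ v:ℝ, v = c a := ⟨_, rfl⟩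
  have hca0 : 0 < ca := by rw [hca]; exact hcpos a haI
  obtain ⟨c2a, hc2a⟩ : ∃ v:ℝ, v = c (2*a) := ⟨_, rfl⟩
  have hc2a0 : 0 < c2a := by rw [hc2a]; exact hcpos _ h2aI
  obtain ⟨u₁, hu₁⟩ : ∃ v:ℝ, v = 16 + 4*Real.sqrt (M / c2a) := ⟨_, rfl⟩
  have hu₁16 : 16 ≤ u₁ := by
    rw [hu₁]; linarith [Real.sqrt_nonneg (M / c2a)]
  have hu₁sq : 16 * (M / c2a) ≤ u₁^2 := by
    have hq : 0 ≤ M / c2a := div_nonneg (by linarith) hc2a0.le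
    have h2 : (4*Real.sqrt (M / c2a))^2 = 16 * (M/c2a) := by
      rw [mul_pow, Real.sq_sqrt hq]; norm_num
    have h3 : (16 + 4*Real.sqrt (M / c2a))^2 = 256 + 128*Real.sqrt (M / c2a) + (4*Real.sqrt (M / c2a))^2 := by ring
    rw [h2] at h3
    rw [hu₁, h3]
    linarith [Real.sqrt_nonneg (M / c2a)]
  -- the threshold ρ for smallness of 2ε₀
  obtain ⟨ρ, hρ0, hρ⟩ : ∃ ρ : ℝ, 0 < ρ ∧ ∀ s : ℝ, 0 < s → s ≤ ρ → M * Real.exp 3 ≤ c s := by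
    have hev : ∀ᶠ s in nhdsWithin (0 : ℝ) (Set.Ioi 0), M * Real.exp 3 ≤ c s :=
      hctend.eventually_ge_atTop _
    rw [eventually_nhdsWithin_iff, Metric.eventually_nhds_iff] at hev
    obtain ⟨δ, hδ0, hδ⟩ := hev
    refine ⟨δ/2, by linarith, fun s hs1 hs2 => ?_⟩
    apply hδ ?_ hs1
    rw [Real.dist_eq, sub_zero, abs_of_nonneg hs1.le]
    linarith
  obtain ⟨C₅, hC₅⟩ : ∃ v:ℝ, v = 2*|Real.log δπ| + 1 + u₁ := ⟨_, rfl⟩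
  have hC₅0 : 0 ≤ C₅ := by rw [hC₅]; positivity
  obtain ⟨C₆, hC₆⟩ : ∃ v:ℝ, v = 16 + C₅ := ⟨_, rfl⟩
  have hC₆16 : 16 ≤ C₆ := by rw [hC₆]; linarith
  have hC₆1 : 1 ≤ C₆ := by linarith
  obtain ⟨X, hXdef⟩ : ∃ v:ℝ, v = max 1 (max (8*C₆^3) (2*C₆/ρ)) := ⟨_, rfl⟩
  have hX1 : 1 ≤ X := by rw [hXdef]; exact le_max_left _ _
  have hX2 : 8*C₆^3 ≤ X := by rw [hXdef]; exact le_trans (le_max_left _ _) (le_max_right _ _)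
  have hX3 : 2*C₆/ρ ≤ X := by rw [hXdef]; exact le_trans (le_max_right _ _) (le_max_right _ _)
  have hX0 : 0 < X := by linarith
  refine ⟨max (max 1 (4/a^2)) (max (2/επ) (max ((256*M/(ca*δπ*a^2))^2) (X^8))), ?_⟩
  intro n hLn hcross
  obtain ⟨L, hLdef⟩ : ∃ v:ℝ, v = A2 x n := ⟨_, rfl⟩
  obtain ⟨Sn, hSn⟩ : ∃ v:ℝ, v = S x n := ⟨_, rfl⟩
  rw [← hLdef] at hLn hcross
  rw [← hSn] at hcross
  have hLc1 : (1:ℝ) ≤ L := le_trans (le_trans (le_max_left _ _) (le_max_left _ _)) hLn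
  have hLc2 : 4/a^2 ≤ L := le_trans (le_trans (le_max_right _ _) (le_max_left _ _)) hLn
  have hLc3 : 2/επ ≤ L := le_trans (le_trans (le_max_left _ _) (le_max_right _ _)) hLn
  have hLc4 : (256*M/(ca*δπ*a^2))^2 ≤ L :=
    le_trans (le_trans (le_trans (le_max_left _ _) (le_max_right _ _)) (le_max_right _ _)) hLn
  have hLc5 : X^8 ≤ L :=
    le_trans (le_trans (le_trans (le_max_right _ _) (le_max_right _ _)) (le_max_right _ _)) hLn
  have hL0 : (0:ℝ) < L := by linarith
  obtain ⟨A, hA⟩ : ∃ v:ℝ, v = Real.sqrt L := ⟨_, rfl⟩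
  have hA1 : 1 ≤ A := by
    rw [hA, show (1:ℝ) = Real.sqrt 1 from Real.sqrt_one.symm]
    exact Real.sqrt_le_sqrt hLc1
  have hA0 : 0 < A := by linarith
  have hA2 : A^2 = L := by rw [hA]; exact Real.sq_sqrt hL0.le
  obtain ⟨r, hrdef⟩ : ∃ v:ℝ, v = Real.sqrt (Real.sqrt (Real.sqrt L)) := ⟨_, rfl⟩
  have hr0 : 0 ≤ r := by rw [hrdef]; positivity
  have hr2 : r^2 = Real.sqrt (Real.sqrt L) := by rw [hrdef]; exact Real.sq_sqrt (by positivity)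
  have hr4 : (r^2)^2 = Real.sqrt L := by rw [hr2]; exact Real.sq_sqrt (by positivity)
  have hr8 : r^8 = L := by
    have h : ((r^2)^2)^2 = L := by rw [hr4]; exact Real.sq_sqrt hL0.le
    rw [show r^8 = ((r^2)^2)^2 by ring]; exact h
  have hA4 : A = r^4 := by
    rw [hA, ← hr4]; ring
  have hr1 : 1 ≤ r := by
    by_contra h
    push_neg at h
    have : r^8 < 1^8 := by
      apply pow_lt_pow_left₀ h hr0
      norm_num
    rw [hr8] at this; norm_num at this; linarith
  have hrX : X ≤ r := by
    by_contra h
    push_neg at h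
    have : r^8 < X^8 := by
      apply pow_lt_pow_left₀ h hr0; norm_num
    rw [hr8] at this; linarith
  obtain ⟨β, hβ⟩ : ∃ v:ℝ, v = betaFun π (1/L) := ⟨_, rfl⟩
  have hβ1 : 1 ≤ β := by rw [hβ, betaFun]; exact le_max_right _ _
  have hlogβ0 : 0 ≤ Real.log β := Real.log_nonneg hβ1
  have hGfun : Gfun π L = Real.sqrt (β + Real.log β) := by rw [Gfun, hβ]
  obtain ⟨Gv, hGv⟩ : ∃ v:ℝ, v = Real.sqrt (β + Real.log β) := ⟨_, rfl⟩
  rw [hGfun, ← hGv, ← hA] at hcross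
  have hG2 : Gv^2 = β + Real.log β := by rw [hGv]; exact Real.sq_sqrt (by linarith)
  have hG1 : 1 ≤ Gv := by
    rw [hGv, show (1:ℝ) = Real.sqrt 1 from Real.sqrt_one.symm]
    exact Real.sqrt_le_sqrt (by linarith)
  have hGv0 : 0 < Gv := by linarith
  have hSn1 : 1 ≤ Sn := by
    have h1 : (1:ℝ)*1 ≤ A*Gv := mul_le_mul hA1 hG1 (by norm_num) (by linarith)
    linarith
  have hSpos : 0 < Sn := by linarith
  obtain ⟨u, hudef⟩ : ∃ v:ℝ, v = Sn / A := ⟨_, rfl⟩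
  have hGu : Gv < u := by
    rw [hudef, lt_div_iff₀ hA0, mul_comm]
    exact hcross
  have hu1 : 1 ≤ u := by linarith
  have hu0 : 0 < u := by linarith
  have huA : u * A = Sn := by rw [hudef]; field_simp
  have hu2 : β + Real.log β ≤ u^2 := by
    have h1 : Gv^2 ≤ u^2 := pow_le_pow_left₀ hGv0.le hGu.le 2
    linarith [hG2]
  have hβu : β ≤ u^2 := by linarith
  obtain ⟨e0, he0⟩ : ∃ v:ℝ, v = Sn / L := ⟨_, rfl⟩
  have he0pos : 0 < e0 := by rw [he0]; positivity
  have he0A : e0 * A = u := by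
    rw [he0, hudef, ← hA2]; field_simp
  have he0u : e0 = u/A := by rw [eq_div_iff hA0.ne']; exact he0A
  have h1Le0 : 1/L ≤ e0 := by
    rw [he0]; gcongr
  have h1L0 : (0:ℝ) < 1/L := by positivity
  have h1Lεπ : 1/L < επ := by
    have h2 : 2 ≤ L * επ := by
      rw [div_le_iff₀ hεπ0] at hLc3; linarith
    rw [div_lt_iff₀ hL0]
    have h3 : L * επ = επ * L := mul_comm _ _
    linarith
  have hπ1L : δπ ≤ π (1/L) := hπlow _ ⟨h1L0, h1Lεπ⟩
  have hw0 : 0 < 1/L * π (1/L) := by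
    apply mul_pos h1L0; linarith
  have hβlow : Real.exp (-β/2) ≤ 1/L * π (1/L) := by
    have h1 : -2 * Real.log (1/L * π (1/L)) ≤ β := by rw [hβ, betaFun]; exact le_max_left _ _
    have h2 : -β/2 ≤ Real.log (1/L * π (1/L)) := by linarith
    calc Real.exp (-β/2) ≤ Real.exp (Real.log (1/L * π (1/L))) := Real.exp_le_exp.2 h2
      _ = 1/L * π (1/L) := Real.exp_log hw0
  have hlogL0 : 0 ≤ Real.log L := Real.log_nonneg hLc1
  have hβB₀ : β ≤ 2*Real.log L + 2*|Real.log δπ| + 1 := by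
    rw [hβ, betaFun]
    apply max_le
    · have hlow : Real.log (δπ * (1/L)) ≤ Real.log (1/L * π (1/L)) := by
        apply Real.log_le_log (by positivity)
        rw [mul_comm δπ (1/L)]
        exact mul_le_mul_of_nonneg_left hπ1L h1L0.le
      rw [Real.log_mul hδπ.ne' h1L0.ne', Real.log_div one_ne_zero hL0.ne', Real.log_one] at hlow
      linarith [neg_abs_le (Real.log δπ), le_abs_self (Real.log δπ), hlow]
    · linarith [abs_nonneg (Real.log δπ), hlogL0]
  have hlogLr : Real.log L ≤ 8*r := by
    have h1 : Real.log L = 8 * Real.log r := by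
      rw [← hr8, Real.log_pow]; norm_num
    have h2 : Real.log r ≤ r - 1 := Real.log_le_sub_one_of_pos (by linarith)
    linarith
  have hβu₁Cr : β + u₁ ≤ C₆ * r := by
    have h1 : C₅ ≤ C₅ * r := le_mul_of_one_le_right hC₅0 hr1
    have h2 : β + u₁ ≤ 2*Real.log L + C₅ := by rw [hC₅]; linarith
    have h3 : C₆ * r = 16*r + C₅*r := by rw [hC₆]; ring
    linarith [hlogLr]
  have hπtnn : ∀ ε ∈ Set.Ioo (0:ℝ) 1, 0 ≤ c ε * π ε := fun ε hε =>
    mul_nonneg (hcpos ε hε).le (hπnn ε (Set.Ioo_subset_Icc_self hε))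
  have hrpos : 0 < r := by linarith
  have hlog2 : Real.log 2 ≤ 1 := by
    linarith [Real.log_le_sub_one_of_pos (by norm_num : (0:ℝ) < 2)]
  have hlog2u : Real.log (2*u) = Real.log 2 + Real.log u := Real.log_mul two_ne_zero hu0.ne'
  rcases le_or_gt a e0 with hbr | hbr
  · -- Branch 1 : a ≤ ε₀
    have h2aA : 2/a ≤ A := by
      rw [hA]
      have h0 : 2/a = Real.sqrt ((2/a)^2) := (Real.sqrt_sq (by positivity)).symm
      rw [h0]
      apply Real.sqrt_le_sqrt
      calc (2/a)^2 = 4/a^2 := by ring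
        _ ≤ L := hLc2
    have h1Aa : 1/A ≤ a/2 := by
      rw [div_le_div_iff₀ hA0 (by norm_num)]
      have h2 : 2 ≤ A * a := (div_le_iff₀ ha0).1 h2aA
      have h3 : A * a = a * A := mul_comm _ _
      linarith
    have hI : Set.Ioo (a/2) (a/2 + 1/A) ⊆ Set.Ioo (0:ℝ) 1 := by
      intro ε hε
      constructor
      · have := hε.1; linarith
      · have h1 : ε < a/2 + 1/A := hε.2
        linarith
    have hpt : ∀ ε ∈ Set.Ioo (a/2) (a/2 + 1/A),
        Real.exp (a*A/8) * (ca * δπ) ≤ (∏ i ∈ Finset.range n, (1 + ε * x i)) * (c ε * π ε) := by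
      intro ε hε
      have hε1 : a/2 < ε := hε.1
      have hε2 : ε < a := by linarith [hε.2]
      have hεpos : 0 < ε := by linarith
      have hε12 : ε ≤ 1/2 := by linarith
      have hεI : ε ∈ Set.Ioo (0:ℝ) 1 := ⟨hεpos, by linarith⟩
      have hprod := prod_lb x hx n hεpos hε12
      rw [← hLdef, ← hSn] at hprod
      have haL : a * L ≤ Sn := by
        rw [he0] at hbr
        exact (le_div_iff₀ hL0).1 hbr
      have hεL : ε * L ≤ Sn :=
        le_trans (mul_le_mul_of_nonneg_right hε2.le hL0.le) haL
      have hSnA : A ≤ Sn := by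
        have h := mul_le_mul_of_nonneg_left hG1 hA0.le
        rw [mul_one] at h
        linarith
      have hexp : a*A/8 ≤ ε * Sn - L*ε^2/2 - L*ε^3 := by
        have h2a : ε*(1/2+ε) ≤ (5/8)*ε := by
          linarith [mul_nonneg hεpos.le (show (0:ℝ) ≤ 1/8 - ε by linarith)]
        have h2b : (ε*L)*(ε*(1/2+ε)) ≤ Sn*((5/8)*ε) :=
          mul_le_mul hεL h2a (by positivity) (by linarith)
        have h3 : (a/2)*A ≤ ε*Sn := mul_le_mul hε1.le hSnA hA0.le hεpos.le
        linarith [h2b, h3, mul_nonneg ha0.le hA0.le]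
      have hca_ε : ca ≤ c ε := by rw [hca]; exact hcanti hεI haI hε2.le
      have hπδ : δπ ≤ π ε := hπlow ε ⟨hεpos, by linarith⟩
      have hprod' : Real.exp (a*A/8) ≤ ∏ i ∈ Finset.range n, (1 + ε * x i) :=
        le_trans (Real.exp_le_exp.2 hexp) hprod
      apply mul_le_mul hprod'
        (mul_le_mul hca_ε hπδ hδπ.le (hcpos ε hεI).le)
        (by positivity)
        (le_trans (Real.exp_nonneg _) hprod')
    have hKlb := K_lb (fun ε => c ε * π ε) hπtnn hint x hx n
      (l := a/2) (w := 1/A) (m := Real.exp (a*A/8) * (ca * δπ))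
      (by positivity) hI hpt
    have hAq : 256*M/(ca*δπ*a^2) ≤ A := by
      rw [hA]
      have h0 : (0:ℝ) ≤ 256*M/(ca*δπ*a^2) := by positivity
      calc 256*M/(ca*δπ*a^2) = Real.sqrt ((256*M/(ca*δπ*a^2))^2) := (Real.sqrt_sq h0).symm
        _ ≤ Real.sqrt L := Real.sqrt_le_sqrt hLc4
    have hsq : (a*A/16)^2 ≤ Real.exp (a*A/8) := by
      have he : Real.exp (a*A/8) = (Real.exp (a*A/16))^2 := by
        rw [sq, ← Real.exp_add]
        congr 1
        ring
      have h1 : a*A/16 + 1 ≤ Real.exp (a*A/16) := by linarith [Real.add_one_le_exp (a*A/16)]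
      have h2 : (0:ℝ) ≤ a*A/16 := by positivity
      rw [he]
      have h3 : (a*A/16 + 1)*(a*A/16 + 1) ≤ Real.exp (a*A/16) * Real.exp (a*A/16) :=
        mul_le_mul h1 h1 (by linarith) (by linarith [Real.exp_nonneg (a*A/16)])
      linarith [h3, h2]
    have hMle : M ≤ (a*A/16)^2 * (ca*δπ) * (1/A) := by
      have hid : (a*A/16)^2 * (ca*δπ) * (1/A) = (ca*δπ*a^2)*A/256 := by
        field_simp
        ring
      rw [hid]
      have h1 : 256*M ≤ A * (ca*δπ*a^2) := (div_le_iff₀ (by positivity)).1 hAq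
      linarith [h1]
    calc M ≤ (a*A/16)^2 * (ca*δπ) * (1/A) := hMle
      _ ≤ Real.exp (a*A/8) * (ca*δπ) * (1/A) :=
          mul_le_mul_of_nonneg_right (mul_le_mul_of_nonneg_right hsq (by positivity)) (by positivity)
      _ = Real.exp (a*A/8) * (ca*δπ) * (1/A) := rfl
      _ ≤ K (fun ε => c ε * π ε) x n := hKlb
  · -- Branch 2 : ε₀ < a
    have h1Ae0 : 1/A ≤ e0 := by
      rw [he0u, div_le_div_iff₀ hA0 hA0]
      have h := mul_le_mul_of_nonneg_right hu1 hA0.le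
      linarith
    have he02a : 2*e0 < 2*a := by linarith
    have h2e0I : 2*e0 ∈ Set.Ioo (0:ℝ) 1 := ⟨by linarith, by linarith⟩
    have hI : Set.Ioo e0 (e0 + 1/A) ⊆ Set.Ioo (0:ℝ) 1 := by
      intro ε hε
      exact ⟨by linarith [hε.1], by linarith [hε.2]⟩
    have hu2L : u^2 = Sn^2/L := by rw [hudef, div_pow, hA2]
    have hpt : ∀ ε ∈ Set.Ioo e0 (e0 + 1/A),
        Real.exp (u^2/2 - 1/2 - 8*u^2*e0) * (c (2*e0) * (Real.exp (-β/2)/(2*e0))) ≤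
          (∏ i ∈ Finset.range n, (1 + ε * x i)) * (c ε * π ε) := by
      intro ε hε
      have hεl : e0 < ε := hε.1
      have hε2e0 : ε ≤ 2*e0 := by linarith [hε.2]
      have hεpos : 0 < ε := by linarith
      have hε2a : ε < 2*a := by linarith
      have hε12 : ε ≤ 1/2 := by linarith
      have hεI : ε ∈ Set.Ioo (0:ℝ) 1 := ⟨hεpos, by linarith⟩
      have hεεπ : ε < επ := by linarith
      have hprod := prod_lb x hx n hεpos hε12
      rw [← hLdef, ← hSn] at hprod
      have hq1 : ε*Sn - L*ε^2/2 = Sn^2/L/2 - L/2*(ε - Sn/L)^2 := by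
        field_simp
        ring
      have hq2 : (ε - Sn/L)^2 ≤ (1/A)^2 := by
        have hl : 0 ≤ ε - Sn/L := by rw [← he0]; linarith
        have hu' : ε - Sn/L ≤ 1/A := by rw [← he0]; linarith [hε.2]
        exact pow_le_pow_left₀ hl hu' 2
      have hq3 : (1/A)^2 = 1/L := by rw [div_pow, one_pow, hA2]
      have hquad : u^2/2 - 1/2 ≤ ε*Sn - L*ε^2/2 := by
        rw [hq1, hu2L]
        have h1 := mul_le_mul_of_nonneg_left (hq3 ▸ hq2) (by positivity : (0:ℝ) ≤ L/2)
        have hLL : L/2 * (1/L) = 1/2 := by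
          field_simp
          try ring
        linarith [h1, hLL]
      have hc1 : ε^3 ≤ 8*e0^3 := by
        have h := pow_le_pow_left₀ hεpos.le hε2e0 3
        linarith [h]
      have hc2 : L*e0^3 = u^2*e0 := by
        rw [he0, hu2L]
        field_simp
      have hcub : L*ε^3 ≤ 8*u^2*e0 := by
        have h := mul_le_mul_of_nonneg_left hc1 hL0.le
        linarith [h, hc2]
      have hφ : u^2/2 - 1/2 - 8*u^2*e0 ≤ ε*Sn - L*ε^2/2 - L*ε^3 := by linarith
      have hmon : 1/L * π (1/L) ≤ ε * π ε :=
        hπmono ⟨h1L0, h1Lεπ⟩ ⟨hεpos, hεεπ⟩ (by linarith [h1Le0])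
      have hπε : Real.exp (-β/2)/ε ≤ π ε := by
        rw [div_le_iff₀ hεpos]
        calc Real.exp (-β/2) ≤ 1/L * π (1/L) := hβlow
          _ ≤ ε * π ε := hmon
          _ = π ε * ε := mul_comm _ _
      have hπε2 : Real.exp (-β/2)/(2*e0) ≤ π ε :=
        le_trans (div_le_div_of_nonneg_left (Real.exp_nonneg _) hεpos hε2e0) hπε
      have hcε : c (2*e0) ≤ c ε := hcanti hεI h2e0I hε2e0
      have hprod' : Real.exp (u^2/2 - 1/2 - 8*u^2*e0) ≤ ∏ i ∈ Finset.range n, (1 + ε * x i) :=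
        le_trans (Real.exp_le_exp.2 hφ) hprod
      apply mul_le_mul hprod'
        (mul_le_mul hcε hπε2 (by positivity) (hcpos ε hεI).le)
        (mul_nonneg (hcpos _ h2e0I).le (by positivity))
        (le_trans (Real.exp_nonneg _) hprod')
    have hKlb := K_lb (fun ε => c ε * π ε) hπtnn hint x hx n
      (l := e0) (w := 1/A)
      (m := Real.exp (u^2/2 - 1/2 - 8*u^2*e0) * (c (2*e0) * (Real.exp (-β/2)/(2*e0))))
      (by positivity) hI hpt
    have h2u0 : (0:ℝ) < 2*u := by linarith
    have hKm : Real.exp (u^2/2 - 1/2 - 8*u^2*e0) * (c (2*e0) * (Real.exp (-β/2)/(2*e0))) * (1/A)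
        = c (2*e0) * Real.exp ((u^2/2 - β/2 - 1/2 - 8*u^2*e0) - Real.log (2*u)) := by
      have hexp2 : Real.exp ((u^2/2 - β/2 - 1/2 - 8*u^2*e0) - Real.log (2*u))
          = Real.exp (u^2/2 - 1/2 - 8*u^2*e0) * Real.exp (-β/2) / (2*u) := by
        rw [Real.exp_sub, Real.exp_log h2u0,
          show u^2/2 - β/2 - 1/2 - 8*u^2*e0 = (u^2/2 - 1/2 - 8*u^2*e0) + (-β/2) by ring,
          Real.exp_add]
      rw [hexp2, ← he0A]
      field_simp
    rcases le_or_gt u (C₆*r) with hbr2 | hbr2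
    · -- Case 2i : u ≤ C₆ r
      have hcub1 : 8*u^2*e0 ≤ 1 := by
        rw [he0u, hA4]
        have h1 : u^3 ≤ (C₆*r)^3 := pow_le_pow_left₀ hu0.le hbr2 3
        have h2 : 8*u^2*(u/r^4) = 8*u^3/r^4 := by ring
        rw [h2, div_le_one (pow_pos hrpos 4)]
        have h3 : 8*C₆^3 ≤ r := le_trans hX2 hrX
        have h4 := mul_le_mul_of_nonneg_right h3 (pow_nonneg hrpos.le 3)
        linarith [h1, h4]
      have h2e0ρ : 2*e0 ≤ ρ := by
        have hre : 2*C₆ ≤ ρ * r := by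
          have h1 : 2*C₆/ρ ≤ r := le_trans hX3 hrX
          rw [div_le_iff₀ hρ0] at h1
          linarith [h1]
        have hr24 : r^2 ≤ r^4 := pow_le_pow_right₀ hr1 (by norm_num)
        have h2 : 2*e0 ≤ 2*C₆/r := by
          rw [he0u, hA4]
          have he' : 2*(u/r^4) = 2*u/r^4 := by ring
          rw [he', div_le_div_iff₀ (pow_pos hrpos 4) hrpos]
          have h3 : u*r ≤ C₆*r*r := mul_le_mul_of_nonneg_right hbr2 hrpos.le
          have h4 := mul_le_mul_of_nonneg_left hr24 (by linarith : (0:ℝ) ≤ 2*C₆)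
          linarith [h3, h4]
        have h5 : 2*C₆/r ≤ ρ := (div_le_iff₀ hrpos).2 (by linarith [hre])
        linarith
      have hc2e0M : M * Real.exp 3 ≤ c (2*e0) := hρ _ (by linarith) h2e0ρ
      have hlogu : Real.log u ≤ Real.log Gv + (u^2 - Gv^2)/2 := by
        have h1 : Real.log (u/Gv) ≤ u/Gv - 1 :=
          Real.log_le_sub_one_of_pos (div_pos hu0 hGv0)
        have h2 : u/Gv - 1 = (u - Gv)/Gv := by field_simp
        have h3 : (u - Gv)/Gv ≤ u - Gv := div_le_self (by linarith) hG1
        have h4 : Real.log (u/Gv) = Real.log u - Real.log Gv := Real.log_div hu0.ne' hGv0.ne'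
        have h5 : u - Gv ≤ (u^2 - Gv^2)/2 := by
          linarith [mul_nonneg (sub_nonneg.2 hGu.le) (by linarith : (0:ℝ) ≤ u + Gv - 2)]
        linarith
      have hlogGv : Real.log Gv ≤ (Real.log 2 + Real.log β)/2 := by
        have h1 : Gv^2 ≤ 2*β := by
          have h := Real.log_le_sub_one_of_pos (by linarith : (0:ℝ) < β)
          linarith [hG2]
        have h2 : Real.log (Gv^2) ≤ Real.log (2*β) := Real.log_le_log (pow_pos hGv0 2) h1
        have h3 : Real.log (Gv^2) = 2*Real.log Gv := by
          rw [Real.log_pow]; norm_num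
        have h4 : Real.log (2*β) = Real.log 2 + Real.log β := Real.log_mul two_ne_zero (by linarith)
        linarith
      have hcore : -3 ≤ (u^2/2 - β/2 - 1/2 - 8*u^2*e0) - Real.log (2*u) := by
        rw [hlog2u]
        linarith [hlogu, hlogGv, hlog2, hcub1, hlogβ0, hG2]
      calc M = M * Real.exp 3 * Real.exp (-3) := by
            rw [mul_assoc, ← Real.exp_add]
            norm_num
        _ ≤ c (2*e0) * Real.exp (-3) := mul_le_mul_of_nonneg_right hc2e0M (Real.exp_nonneg _)
        _ ≤ c (2*e0) * Real.exp ((u^2/2 - β/2 - 1/2 - 8*u^2*e0) - Real.log (2*u)) :=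
            mul_le_mul_of_nonneg_left (Real.exp_le_exp.2 hcore) (hcpos _ h2e0I).le
        _ = Real.exp (u^2/2 - 1/2 - 8*u^2*e0) * (c (2*e0) * (Real.exp (-β/2)/(2*e0))) * (1/A) :=
            hKm.symm
        _ ≤ K (fun ε => c ε * π ε) x n := hKlb
    · -- Case 2ii : C₆ r < u
      have hβltu : β < u := by linarith [hβu₁Cr, hu₁16]
      have hu₁u : u₁ ≤ u := by linarith [hβu₁Cr, hβ1]
      have hcub2 : 8*u^2*e0 ≤ u^2/4 := by
        have h1 : 8*u^2*e0 ≤ 8*u^2*a :=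
          mul_le_mul_of_nonneg_left hbr.le (by positivity)
        have h2 : (8:ℝ)*a ≤ 1/4 := by linarith
        have h3 := mul_le_mul_of_nonneg_left h2 (sq_nonneg u)
        linarith [h1, h3]
      have hlogu2 : Real.log u ≤ u - 1 := Real.log_le_sub_one_of_pos hu0
      have hcore2 : u₁^2/16 ≤ (u^2/2 - β/2 - 1/2 - 8*u^2*e0) - Real.log (2*u) := by
        rw [hlog2u]
        have h1 : u₁^2/16 ≤ u^2/4 - 2*u := by
          linarith [mul_nonneg (sub_nonneg.2 hu₁u) (by linarith : (0:ℝ) ≤ u + u₁ - 8),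
            mul_nonneg (by linarith : (0:ℝ) ≤ u₁) (by linarith : (0:ℝ) ≤ 3*u₁ - 32)]
        linarith [hβltu, hlogu2, hlog2, hcub2, hu1]
      have hc2ac2e0 : c2a ≤ c (2*e0) := by
        rw [hc2a]; exact hcanti h2e0I h2aI he02a.le
      have hMdiv : M / c2a ≤ Real.exp (u₁^2/16) := by
        have h1 : M/c2a ≤ u₁^2/16 := by linarith [hu₁sq]
        linarith [Real.add_one_le_exp (u₁^2/16)]
      calc M = c2a * (M / c2a) := by field_simp
        _ ≤ c (2*e0) * Real.exp ((u^2/2 - β/2 - 1/2 - 8*u^2*e0) - Real.log (2*u)) :=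
            mul_le_mul hc2ac2e0 (le_trans hMdiv (Real.exp_le_exp.2 hcore2))
              (div_nonneg (by linarith) hc2a0.le) (hcpos _ h2e0I).le
        _ = Real.exp (u^2/2 - 1/2 - 8*u^2*e0) * (c (2*e0) * (Real.exp (-β/2)/(2*e0))) * (1/A) :=
            hKm.symm
        _ ≤ K (fun ε => c ε * π ε) x n := hKlb

theorem efkp_general_prior (π : ℝ → ℝ) (επ δπ : ℝ) (hπ : Assumption1 π επ δπ) :
    ∃ πt : ℝ → ℝ,
      (∃ c : ℝ → ℝ, (∀ ε ∈ Set.Ioo (0 : ℝ) 1, 0 < c ε) ∧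
        AntitoneOn c (Set.Ioo (0 : ℝ) 1) ∧
        Filter.Tendsto c (nhdsWithin (0 : ℝ) (Set.Ioi 0)) Filter.atTop ∧
        ∀ ε ∈ Set.Ioo (0 : ℝ) 1, πt ε = c ε * π ε) ∧
      (∀ ε ∈ Set.Ioo (0 : ℝ) 1, 0 ≤ πt ε) ∧
      MeasureTheory.IntegrableOn πt (Set.Ioo (0 : ℝ) 1) ∧
      ∀ x : ℕ → ℝ, (∀ i, -1 ≤ x i) →
        Filter.Tendsto (A2 x) Filter.atTop Filter.atTop →
        (∃ᶠ n in Filter.atTop, Real.sqrt (A2 x n) * Gfun π (A2 x n) < S x n) →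
        Filter.limsup (fun n => ((K πt x n : ℝ) : EReal)) Filter.atTop = ⊤ := by
  obtain ⟨c, hcpos, hcanti, hctend, hcint⟩ := exists_c π hπ.2.2.2.1 hπ.2.2.1
  refine ⟨fun ε => c ε * π ε, ⟨c, hcpos, hcanti, hctend, fun ε _ => rfl⟩, ?_, hcint, ?_⟩
  · intro ε hε
    exact mul_nonneg (hcpos ε hε).le (hπ.2.2.1 ε (Set.Ioo_subset_Icc_self hε))
  · intro x hx hA2top hfreq
    rw [EReal.eq_top_iff_forall_lt]
    intro y
    obtain ⟨Λ, hΛ⟩ := key_lemma π επ δπ hπ c hcpos hcanti hctend hcint x hx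
      (max (y+1) 1) (le_max_right _ _)
    have hev : ∀ᶠ n in Filter.atTop, Λ ≤ A2 x n := hA2top.eventually_ge_atTop Λ
    have hfr : ∃ᶠ n in Filter.atTop,
        max (y+1) 1 ≤ K (fun ε => c ε * π ε) x n := by
      apply (hfreq.and_eventually hev).mono
      rintro n ⟨h1, h2⟩
      exact hΛ n h2 h1
    have hle : ((max (y+1) 1 : ℝ) : EReal) ≤
        Filter.limsup (fun n => ((K (fun ε => c ε * π ε) x n : ℝ) : EReal)) Filter.atTop := by
      apply le_limsup_of_frequently_le'
      apply hfr.mono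
      intro n hn
      exact EReal.coe_le_coe_iff.2 hn
    have hlt : ((y:ℝ) : EReal) < ((max (y+1) 1 : ℝ) : EReal) :=
      EReal.coe_lt_coe_iff.2 (lt_of_lt_of_le (by linarith) (le_max_left _ _))
    exact lt_of_lt_of_le hlt hle
end

section
/- Let (b_n) be an increasing sequence of positive reals with lim_n b_n = ∞ and Σ_{n=1}^∞ 1/b_n < ∞. Then there exists a prudent strategy (K_0, M) for Skeptic in the one-sided unbounded forecasting game such that for every path x with S_n/b_n not converging to 0, sup_n K_n(x) = ∞. -/
open Filter Set

/-- Capital process of the strategy `(K₀, M)` along the path `x`: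
`K_n(x) = K₀ + Σ_{i=1}^n M_i(x_1,...,x_{i-1})·x_i`, where the bet on round `i`
is determined by the history of Reality's previous moves. -/
noncomputable def capital (K₀ : ℝ) (M : List ℝ → ℝ) (x : ℕ → ℝ) (n : ℕ) : ℝ :=
  K₀ + ∑ i ∈ Finset.range n, M (List.ofFn (fun j : Fin i => x j)) * x i

/-- A strategy is prudent if its capital stays nonnegative along every path
of the one-sided unbounded forecasting game. -/
def Prudent (K₀ : ℝ) (M : List ℝ → ℝ) : Prop :=
  ∀ x : ℕ → ℝ, (∀ n, -1 ≤ x n) → ∀ n, 0 ≤ capital K₀ M x n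

open Finset Asymptotics Topology

/-- Abel summation identity. -/
lemma abel_id (b a : ℕ → ℝ) : ∀ n,
    (∑ i ∈ Finset.range n, b i * a i)
      + (∑ i ∈ Finset.range n, (b (i+1) - b i) * (∑ j ∈ Finset.range (i+1), a j))
    = b n * ∑ i ∈ Finset.range n, a i := by
  intro n
  induction n with
  | zero => simp
  | succ n ih =>
    rw [Finset.sum_range_succ, Finset.sum_range_succ (f := fun i =>
      (b (i+1) - b i) * (∑ j ∈ Finset.range (i+1), a j)),
      Finset.sum_range_succ (f := a)]
    linear_combination ih

/-- Weighted average of a converging sequence converges to the same limit. -/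
lemma weighted_avg (b : ℕ → ℝ) (hb : ∀ n, 0 < b n) (hmono : Monotone b)
    (hlim : Filter.Tendsto b Filter.atTop Filter.atTop)
    (t : ℕ → ℝ) (l : ℝ) (ht : Filter.Tendsto t Filter.atTop (nhds l)) :
    Filter.Tendsto (fun n => (∑ i ∈ Finset.range n, (b (i+1) - b i) * t i) / b n)
      Filter.atTop (nhds l) := by
  set w : ℕ → ℝ := fun i => b (i+1) - b i with hw
  have hw0 : ∀ i, 0 ≤ w i := fun i => sub_nonneg.2 (hmono (Nat.le_succ i))
  have hsum : ∀ n, ∑ i ∈ Finset.range n, w i = b n - b 0 := by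
    intro n; exact Finset.sum_range_sub b n
  have h'g : Tendsto (fun n => ∑ i ∈ Finset.range n, w i) atTop atTop := by
    simp only [hsum]
    exact tendsto_atTop_add_const_right _ (-(b 0)) hlim
  have h0 : Tendsto (fun i => t i - l) atTop (nhds 0) := by
    simpa using ht.sub (tendsto_const_nhds (x := l))
  have hlo : (fun i => w i * (t i - l)) =o[atTop] w := by
    have := (isBigO_refl w atTop).mul_isLittleO ((isLittleO_one_iff ℝ).2 h0)
    simpa using this
  have h2 := hlo.sum_range hw0 h'g
  have h3 : (fun n => ∑ i ∈ Finset.range n, w i) =O[atTop] b := by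
    apply IsBigO.of_bound 1
    filter_upwards with n
    have h1 : b 0 ≤ b n := hmono (Nat.zero_le n)
    rw [hsum n, Real.norm_eq_abs, Real.norm_eq_abs, one_mul,
      abs_of_nonneg (sub_nonneg.2 h1), abs_of_pos (hb n)]
    linarith [hb 0]
  have h4 := h2.trans_isBigO h3
  have h5 : Tendsto (fun n => (∑ i ∈ Finset.range n, w i * (t i - l)) / b n)
      atTop (nhds 0) := h4.tendsto_div_nhds_zero
  have hinv : Tendsto (fun n => (b n)⁻¹) atTop (nhds 0) := hlim.inv_tendsto_atTop
  have key : ∀ n, (∑ i ∈ Finset.range n, w i * t i) / b n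
      = (∑ i ∈ Finset.range n, w i * (t i - l)) / b n + l - l * b 0 * (b n)⁻¹ := by
    intro n
    have hbn : b n ≠ 0 := (hb n).ne'
    have hrw : ∑ i ∈ Finset.range n, w i * t i
        = (∑ i ∈ Finset.range n, w i * (t i - l)) + l * (b n - b 0) := by
      rw [← hsum n, Finset.mul_sum, ← Finset.sum_add_distrib]
      refine Finset.sum_congr rfl fun i _ => by ring
    rw [hrw]
    field_simp
    ring
  refine Tendsto.congr (fun n => (key n).symm) ?_
  have := (h5.add_const l).sub (hinv.const_mul (l * b 0))
  simpa using this

/-- Kronecker's lemma. -/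
lemma kronecker (b : ℕ → ℝ) (hb : ∀ n, 0 < b n) (hmono : Monotone b)
    (hlim : Filter.Tendsto b Filter.atTop Filter.atTop)
    (a : ℕ → ℝ) (l : ℝ)
    (ha : Filter.Tendsto (fun n => ∑ i ∈ Finset.range n, a i) Filter.atTop (nhds l)) :
    Filter.Tendsto (fun n => (∑ i ∈ Finset.range n, b i * a i) / b n)
      Filter.atTop (nhds 0) := by
  have hshift : Filter.Tendsto (fun i => ∑ j ∈ Finset.range (i+1), a j)
      Filter.atTop (nhds l) := ha.comp (tendsto_add_atTop_nat 1)
  have hV := weighted_avg b hb hmono hlim _ l hshift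
  have key : ∀ n, (∑ i ∈ Finset.range n, b i * a i) / b n
      = (∑ i ∈ Finset.range n, a i)
        - (∑ i ∈ Finset.range n, (b (i+1) - b i) * (∑ j ∈ Finset.range (i+1), a j)) / b n := by
    intro n
    have hbn : b n ≠ 0 := (hb n).ne'
    have h := abel_id b a n
    field_simp
    linarith [h]
  simp only [key]
  have := ha.sub hV
  simpa using this

theorem skeptic_forces_slln_rate (b : ℕ → ℝ) (hb : ∀ n, 0 < b n) (hmono : Monotone b)
    (hlim : Filter.Tendsto b Filter.atTop Filter.atTop)
    (hsum : Summable fun n => 1 / b n) :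
    ∃ K₀ : ℝ, ∃ M : List ℝ → ℝ, 0 < K₀ ∧ Prudent K₀ M ∧
      ∀ x : ℕ → ℝ, (∀ n, -1 ≤ x n) →
        ¬ Filter.Tendsto (fun n => S x n / b n) Filter.atTop (nhds 0) →
        ¬ BddAbove (Set.range fun n => capital K₀ M x n) := by
  set C : ℝ := ∑' n, 1 / b n with hC
  have hinv : ∀ i, (0:ℝ) < 1 / b i := fun i => div_pos one_pos (hb i)
  have hCnn : 0 ≤ C := tsum_nonneg fun n => (hinv n).le
  have hcap : ∀ (x : ℕ → ℝ) (n : ℕ),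
      capital (C + 1) (fun l => 1 / b l.length) x n
        = C + 1 + ∑ i ∈ Finset.range n, (1 / b i) * x i := by
    intro x n
    unfold capital
    congr 1
    exact Finset.sum_congr rfl fun i _ => by simp
  have hpartC : ∀ n, ∑ i ∈ Finset.range n, 1 / b i ≤ C :=
    fun n => Summable.sum_le_tsum _ (fun i _ => (hinv i).le) hsum
  refine ⟨C + 1, fun l => 1 / b l.length, by linarith, ?_, ?_⟩
  · -- Prudent
    intro x hx n
    rw [hcap]
    have h2 : -(∑ i ∈ Finset.range n, 1 / b i)
        ≤ ∑ i ∈ Finset.range n, (1 / b i) * x i := by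
      rw [← Finset.sum_neg_distrib]
      refine Finset.sum_le_sum fun i _ => ?_
      have h1 := hinv i
      nlinarith [hx i]
    linarith [hpartC n]
  · intro x hx hnot hbdd
    apply hnot
    obtain ⟨B, hB⟩ := hbdd
    have hTle : ∀ n, ∑ i ∈ Finset.range n, (1 / b i) * x i ≤ B - (C + 1) := by
      intro n
      have := hB ⟨n, rfl⟩
      simp only [hcap] at this
      linarith
    set P : ℕ → ℝ := fun n => ∑ i ∈ Finset.range n, ((1 / b i) * x i + 1 / b i) with hP
    have hPsplit : ∀ n, P n = (∑ i ∈ Finset.range n, (1 / b i) * x i)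
        + ∑ i ∈ Finset.range n, 1 / b i := by
      intro n; rw [hP]; exact Finset.sum_add_distrib
    have hPmono : Monotone P := by
      apply monotone_nat_of_le_succ
      intro n
      have h1 := hinv n
      have : 0 ≤ (1 / b n) * x n + 1 / b n := by nlinarith [hx n]
      rw [hP]
      simp only [Finset.sum_range_succ]
      linarith
    have hPbdd : BddAbove (Set.range P) := by
      refine ⟨B - (C + 1) + C, ?_⟩
      rintro _ ⟨n, rfl⟩
      rw [hPsplit n]
      linarith [hTle n, hpartC n]
    have hPconv := tendsto_atTop_ciSup hPmono hPbdd
    have hN : Filter.Tendsto (fun n => ∑ i ∈ Finset.range n, 1 / b i)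
        Filter.atTop (nhds C) := hsum.hasSum.tendsto_sum_nat
    have hT : Filter.Tendsto (fun n => ∑ i ∈ Finset.range n, (1 / b i) * x i)
        Filter.atTop (nhds ((⨆ n, P n) - C)) := by
      refine (hPconv.sub hN).congr fun n => ?_
      rw [hPsplit n]; ring
    have hK := kronecker b hb hmono hlim (fun i => (1 / b i) * x i) _ hT
    refine hK.congr fun n => ?_
    unfold S
    congr 1
    refine Finset.sum_congr rfl fun i _ => ?_
    rw [show b i * (1 / b i * x i) = (b i / b i) * x i by ring, div_self (hb i).ne', one_mul]
end

section
/- Let (b_n) be an increasing sequence of positive reals with lim_n b_n = ∞ and Σ_{n=1}^∞ 1/b_n = ∞. Then for every prudent strategy (K_0, M) for Skeptic in the one-sided unbounded forecasting game there exists a path x such that sup_n K_n(x) < ∞ and limsup_{n→∞} |S_n|/b_n ≥ 1; in particular, no prudent strategy weakly forces S_n/b_n → 0. -/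
open Filter Set

open Classical in
/-- Reality's bookkeeping: the history so far and the number of jumps so far. -/
noncomputable def pref (b : ℕ → ℝ) (M : List ℝ → ℝ) : ℕ → List ℝ × ℕ
  | 0 => ([], 0)
  | n + 1 =>
      if M (pref b M n).1 * (2 * b (n + 1)) ≤ (1 / 2 : ℝ) ^ (pref b M n).2 then
        ((pref b M n).1 ++ [2 * b (n + 1)], (pref b M n).2 + 1)
      else ((pref b M n).1 ++ [-1], (pref b M n).2)

open Classical in
/-- Reality's path. -/
noncomputable def X (b : ℕ → ℝ) (M : List ℝ → ℝ) (n : ℕ) : ℝ :=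
  if M (pref b M n).1 * (2 * b (n + 1)) ≤ (1 / 2 : ℝ) ^ (pref b M n).2 then
    2 * b (n + 1)
  else -1

lemma X_pos_case (b : ℕ → ℝ) (M : List ℝ → ℝ) (n : ℕ)
    (h : M (pref b M n).1 * (2 * b (n + 1)) ≤ (1 / 2 : ℝ) ^ (pref b M n).2) :
    X b M n = 2 * b (n + 1) ∧ (pref b M (n + 1)).2 = (pref b M n).2 + 1 := by
  classical
  constructor
  · rw [X, if_pos h]
  · show (pref b M (n+1)).2 = _
    rw [pref, if_pos h]

lemma X_neg_case (b : ℕ → ℝ) (M : List ℝ → ℝ) (n : ℕ)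
    (h : ¬ (M (pref b M n).1 * (2 * b (n + 1)) ≤ (1 / 2 : ℝ) ^ (pref b M n).2)) :
    X b M n = -1 ∧ (pref b M (n + 1)).2 = (pref b M n).2 := by
  classical
  constructor
  · rw [X, if_neg h]
  · show (pref b M (n+1)).2 = _
    rw [pref, if_neg h]

lemma pref_fst (b : ℕ → ℝ) (M : List ℝ → ℝ) (n : ℕ) :
    (pref b M n).1 = List.ofFn (fun j : Fin n => X b M j) := by
  induction n with
  | zero => simp [pref]
  | succ n ih =>
      rw [List.ofFn_succ']
      simp only [Fin.coe_castSucc, Fin.val_last, List.concat_eq_append]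
      rw [← ih]
      classical
      by_cases h : M (pref b M n).1 * (2 * b (n + 1)) ≤ (1 / 2 : ℝ) ^ (pref b M n).2
      · have hX : X b M n = 2 * b (n + 1) := (X_pos_case b M n h).1
        show (pref b M (n+1)).1 = _
        rw [pref, if_pos h, hX]
      · have hX : X b M n = -1 := (X_neg_case b M n h).1
        show (pref b M (n+1)).1 = _
        rw [pref, if_neg h, hX]

lemma X_ge (b : ℕ → ℝ) (hb : ∀ n, 0 < b n) (M : List ℝ → ℝ) (n : ℕ) :
    -1 ≤ X b M n := by
  rw [X]
  split
  · nlinarith [hb (n + 1)]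
  · exact le_rfl

lemma capital_succ (K₀ : ℝ) (M : List ℝ → ℝ) (x : ℕ → ℝ) (n : ℕ) :
    capital K₀ M x (n + 1) =
      capital K₀ M x n + M (List.ofFn (fun j : Fin n => x j)) * x n := by
  rw [capital, capital, Finset.sum_range_succ, ← add_assoc]

lemma capital_congr (K₀ : ℝ) (M : List ℝ → ℝ) (x y : ℕ → ℝ) (n : ℕ)
    (h : ∀ i < n, x i = y i) : capital K₀ M x n = capital K₀ M y n := by
  rw [capital, capital]
  congr 1
  refine Finset.sum_congr rfl fun i hi => ?_
  have hi' := Finset.mem_range.mp hi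
  have : (fun j : Fin i => x j) = fun j : Fin i => y j := by
    funext j; exact h j (lt_trans j.2 hi')
  rw [this, h i hi']

/-- Prudence forces nonnegative bets along any valid path. -/
lemma bet_nonneg (K₀ : ℝ) (M : List ℝ → ℝ) (hP : Prudent K₀ M)
    (x : ℕ → ℝ) (hx : ∀ n, -1 ≤ x n) (n : ℕ) :
    0 ≤ M (List.ofFn (fun j : Fin n => x j)) := by
  by_contra h
  push_neg at h
  set m := M (List.ofFn (fun j : Fin n => x j)) with hm
  set K := capital K₀ M x n with hK
  classical
  set y : ℕ → ℝ := fun j => if j < n then x j else if j = n then (K + 1) / (-m) else 0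
    with hy
  have hyn : y n = (K + 1) / (-m) := by simp [hy]
  have hKnn : 0 ≤ K := hP x hx n
  have hynn : 0 ≤ y n := by
    rw [hyn]
    apply div_nonneg (by linarith) (by linarith)
  have hyv : ∀ j, -1 ≤ y j := by
    intro j
    by_cases hj : j < n
    · rw [hy]; simp only [if_pos hj]; exact hx j
    · by_cases hj2 : j = n
      · subst hj2; linarith [hynn]
      · rw [hy]; simp only [if_neg hj, if_neg hj2]; norm_num
  have heq : ∀ i < n, y i = x i := fun i hi => by simp [hy, hi]
  have hcap : capital K₀ M y n = K := capital_congr K₀ M y x n heq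
  have hhist : (fun j : Fin n => y j) = fun j : Fin n => x j := by
    funext j; exact heq j j.2
  have hcs := capital_succ K₀ M y n
  rw [hhist, ← hm, hcap, hyn] at hcs
  have hm0 : m ≠ 0 := ne_of_lt h
  have hval : m * ((K + 1) / (-m)) = -(K + 1) := by
    rw [div_neg, mul_neg, ← mul_div_assoc, mul_comm, mul_div_assoc, div_self hm0, mul_one]
  rw [hval] at hcs
  have := hP y hyv (n + 1)
  rw [hcs] at this
  linarith

theorem reality_defeats_slln_rate (b : ℕ → ℝ) (hb : ∀ n, 0 < b n) (hmono : Monotone b)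
    (hlim : Filter.Tendsto b Filter.atTop Filter.atTop)
    (hsum : ¬ Summable fun n => 1 / b n) :
    ∀ K₀ : ℝ, ∀ M : List ℝ → ℝ, 0 < K₀ → Prudent K₀ M →
      (∃ x : ℕ → ℝ, (∀ n, -1 ≤ x n) ∧
        BddAbove (Set.range fun n => capital K₀ M x n) ∧
        1 ≤ Filter.limsup (fun n => ((|S x n| / b n : ℝ) : EReal)) Filter.atTop) ∧
      ¬ (∀ x : ℕ → ℝ, (∀ n, -1 ≤ x n) →
          ¬ Filter.Tendsto (fun n => S x n / b n) Filter.atTop (nhds 0) →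
          ¬ BddAbove (Set.range fun n => capital K₀ M x n)) := by
  intro K₀ M hK₀ hP
  classical
  have hx : ∀ n, -1 ≤ X b M n := X_ge b hb M
  have hhist : ∀ n, (List.ofFn fun j : Fin n => X b M j) = (pref b M n).1 :=
    fun n => (pref_fst b M n).symm
  have hMn : ∀ n, 0 ≤ M (pref b M n).1 := by
    intro n
    rw [← hhist]
    exact bet_nonneg K₀ M hP _ hx n
  have hcs : ∀ n, capital K₀ M (X b M) (n + 1) =
      capital K₀ M (X b M) n + M (pref b M n).1 * X b M n := by
    intro n
    rw [capital_succ, hhist]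
  have hcapnn := hP (X b M) hx
  -- capital bound by induction
  have hbd : ∀ n, capital K₀ M (X b M) n ≤ K₀ + 2 - 2 * (1 / 2 : ℝ) ^ (pref b M n).2 := by
    intro n
    induction n with
    | zero =>
        have h0 : (pref b M 0).2 = 0 := rfl
        rw [h0]
        norm_num [capital]
    | succ n ih =>
        rw [hcs n]
        by_cases h : M (pref b M n).1 * (2 * b (n + 1)) ≤ (1 / 2 : ℝ) ^ (pref b M n).2
        · obtain ⟨hX, hk⟩ := X_pos_case b M n h
          rw [hX, hk, pow_succ]
          linarith
        · obtain ⟨hX, hk⟩ := X_neg_case b M n h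
          rw [hX, hk]
          have := hMn n
          linarith
  have hbd' : ∀ n, capital K₀ M (X b M) n ≤ K₀ + 2 := by
    intro n
    have h1 : (0 : ℝ) < (1 / 2 : ℝ) ^ (pref b M n).2 := by positivity
    linarith [hbd n]
  -- infinitely many jumps
  have hjumps : ∀ N : ℕ, ∃ n ≥ N,
      M (pref b M n).1 * (2 * b (n + 1)) ≤ (1 / 2 : ℝ) ^ (pref b M n).2 := by
    intro N
    by_contra hno
    push_neg at hno
    have hkconst : ∀ n, N ≤ n → (pref b M n).2 = (pref b M N).2 := by
      intro n
      induction n with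
      | zero =>
          intro hn
          have : N = 0 := Nat.le_zero.mp hn
          rw [this]
      | succ n ih =>
          intro hn
          rcases Nat.lt_or_ge n N with h' | h'
          · have : N = n + 1 := by omega
            rw [this]
          · rw [(X_neg_case b M n (not_le.mpr (hno n h'))).2, ih h']
    have hdec : ∀ n, N ≤ n → capital K₀ M (X b M) (n + 1) =
        capital K₀ M (X b M) n - M (pref b M n).1 := by
      intro n hn
      rw [hcs n, (X_neg_case b M n (not_le.mpr (hno n hn))).1]
      ring
    have key : ∀ m : ℕ, capital K₀ M (X b M) (N + m) =
        capital K₀ M (X b M) N - ∑ i ∈ Finset.range m, M (pref b M (N + i)).1 := by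
      intro m
      induction m with
      | zero => simp
      | succ m ih =>
          rw [Finset.sum_range_succ, ← Nat.add_assoc,
            hdec (N + m) (Nat.le_add_right _ _), ih]
          ring
    have hsumbd : ∀ m : ℕ,
        ∑ i ∈ Finset.range m, M (pref b M (N + i)).1 ≤ capital K₀ M (X b M) N := by
      intro m
      have := hcapnn (N + m)
      rw [key m] at this
      linarith
    set c : ℝ := (1 / 2 : ℝ) ^ (pref b M N).2 / 2 with hc
    have hcpos : 0 < c := by positivity
    have hMlow : ∀ n, N ≤ n → c * (1 / b (n + 1)) < M (pref b M n).1 := by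
      intro n hn
      have h1 := hno n hn
      rw [hkconst n hn] at h1
      have hbp : 0 < b (n + 1) := hb _
      have : c * (1 / b (n + 1)) = (1 / 2 : ℝ) ^ (pref b M N).2 / (2 * b (n + 1)) := by
        rw [hc]; field_simp
      rw [this, div_lt_iff₀ (by positivity)]
      linarith
    have hpsb : ∀ m : ℕ,
        ∑ i ∈ Finset.range m, c * (1 / b (N + i + 1)) ≤ capital K₀ M (X b M) N := by
      intro m
      refine le_trans (Finset.sum_le_sum fun i _ => ?_) (hsumbd m)
      exact le_of_lt (hMlow (N + i) (Nat.le_add_right _ _))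
    have hsummable : Summable fun i => c * (1 / b (N + i + 1)) := by
      refine summable_of_sum_range_le (fun i => ?_) hpsb
      have := hb (N + i + 1)
      positivity
    have h1 : Summable fun i => 1 / b (N + i + 1) :=
      (summable_mul_left_iff (ne_of_gt hcpos)).mp hsummable
    have h2 : Summable fun i => 1 / b (i + (N + 1)) := by
      refine h1.congr fun i => ?_
      congr 2
      omega
    exact hsum ((summable_nat_add_iff (N + 1)).mp h2)
  -- frequently |S|/b ≥ 1
  have hfreq : ∀ N : ℕ, ∃ m ≥ N, 1 ≤ |S (X b M) m| / b m := by
    intro N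
    obtain ⟨n, hn, hJ⟩ := hjumps N
    have hxn := (X_pos_case b M n hJ).1
    have hSsucc : S (X b M) (n + 1) = S (X b M) n + 2 * b (n + 1) := by
      rw [S, S, Finset.sum_range_succ, hxn]
    rcases le_or_gt (-(b (n + 1))) (S (X b M) n) with h | h
    · refine ⟨n + 1, by omega, ?_⟩
      rw [one_le_div (hb (n + 1))]
      calc b (n + 1) ≤ S (X b M) (n + 1) := by rw [hSsucc]; linarith
        _ ≤ |S (X b M) (n + 1)| := le_abs_self _
    · refine ⟨n, hn, ?_⟩
      rw [one_le_div (hb n)]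
      have h1 : b n ≤ b (n + 1) := hmono (Nat.le_succ n)
      calc b n ≤ -(S (X b M) n) := by linarith
        _ ≤ |S (X b M) n| := neg_le_abs _
  have hfreq' : ∃ᶠ m in atTop, 1 ≤ |S (X b M) m| / b m := Filter.frequently_atTop.mpr hfreq
  have hBdd : BddAbove (Set.range fun n => capital K₀ M (X b M) n) := by
    refine ⟨K₀ + 2, ?_⟩
    rintro v ⟨n, rfl⟩
    exact hbd' n
  have hlimsup :
      1 ≤ Filter.limsup (fun n => ((|S (X b M) n| / b n : ℝ) : EReal)) Filter.atTop := by
    have h1 : (1 : EReal) = ((1 : ℝ) : EReal) := rfl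
    rw [h1]
    refine Filter.le_limsup_of_frequently_le ?_ ?_
    · exact hfreq'.mono fun m hm => EReal.coe_le_coe_iff.mpr hm
    · exact Filter.isBoundedUnder_of ⟨⊤, fun _ => le_top⟩
  have hmain : ∃ x : ℕ → ℝ, (∀ n, -1 ≤ x n) ∧
      BddAbove (Set.range fun n => capital K₀ M x n) ∧
      1 ≤ Filter.limsup (fun n => ((|S x n| / b n : ℝ) : EReal)) Filter.atTop :=
    ⟨X b M, hx, hBdd, hlimsup⟩
  refine ⟨hmain, ?_⟩
  intro H
  have hnt : ¬ Filter.Tendsto (fun n => S (X b M) n / b n) Filter.atTop (nhds 0) := by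
    intro ht
    have h2 : Filter.Tendsto (fun n => |S (X b M) n / b n|) Filter.atTop (nhds 0) := by
      have := ht.abs
      rwa [abs_zero] at this
    have hev : ∀ᶠ n in atTop, |S (X b M) n / b n| < 1 := h2.eventually_lt_const one_pos
    obtain ⟨m, hm1, hm2⟩ := (hfreq'.and_eventually hev).exists
    rw [abs_div, abs_of_pos (hb m)] at hm2
    linarith
  exact H (X b M) hx hnt hBdd
end
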